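/- arXiv:1705.03038 — 6 statements merged into one kernel-verified Lean document; each statement's English description precedes it below -/
import Mathlib

section
/- Let γ = ‖R_K A (I − R_K)‖₂ (the operator norm induced by ‖·‖₂). Let (λ, u) be any eigenpair of A with u ≠ 0, let λ̃ be the Ritz value of A on K closest to λ, and let δ > 0 be the distance from λ to the set of Ritz values of A on K other than λ̃. Then there exists a Ritz vector ũ ≠ 0 associated with λ̃ such that sin θ(u, ũ) ≤ √(1 + γ²/δ²) · sin θ(u, K), where sin θ(u, K) = ‖(I − R_K)u‖₂/‖u‖₂ and sin θ(u, ũ) = ‖(I − R_{span{ũ}})u‖₂/‖u‖₂. -/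
set_option maxHeartbeats 2000000

open RealInnerProductSpace


open Matrix

/-- The Euclidean (`L²`) norm on `ℝⁿ`: `‖x‖₂ = √(xᵀx)`. -/
noncomputable def l2N {n : ℕ} (x : Fin n → ℝ) : ℝ := Real.sqrt (x ⬝ᵥ x)

/-- The energy norm induced by the matrix `A`: `‖x‖_A = √(xᵀAx)`. -/
noncomputable def aN {n : ℕ} (A : Matrix (Fin n) (Fin n) ℝ) (x : Fin n → ℝ) : ℝ :=
  Real.sqrt (x ⬝ᵥ (A *ᵥ x))

/-- `η_K = sup_{‖g‖₂ = 1} ‖(I - P_K) A⁻¹ g‖_A`, where `P` is the `A`-orthogonal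
projection onto the subspace `K`. -/
noncomputable def etaK {n : ℕ} (A : Matrix (Fin n) (Fin n) ℝ)
    (P : (Fin n → ℝ) →ₗ[ℝ] (Fin n → ℝ)) : ℝ :=
  sSup ((fun g => aN A ((A⁻¹ *ᵥ g) - P (A⁻¹ *ᵥ g))) '' {g | l2N g = 1})

/-- `sin θ(u, K) = ‖(I - R_K) u‖₂ / ‖u‖₂`, where `R` is the `L²`-orthogonal
projection onto the subspace `K`. -/
noncomputable def sinAngleSub {n : ℕ} (R : (Fin n → ℝ) →ₗ[ℝ] (Fin n → ℝ))
    (u : Fin n → ℝ) : ℝ :=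
  l2N (u - R u) / l2N u

/-- `sin θ(u, w) = ‖(I - R_{span{w}}) u‖₂ / ‖u‖₂`, where `R_{span{w}}` is the
`L²`-orthogonal projection onto `span{w}`. -/
noncomputable def sinAngleVec {n : ℕ} (u w : Fin n → ℝ) : ℝ :=
  l2N (u - ((u ⬝ᵥ w) / (w ⬝ᵥ w)) • w) / l2N u

section SaadAux


lemma norm_sum_sq_orthonormal {E : Type*} [NormedAddCommGroup E] [InnerProductSpace ℝ E]
    {ι : Type*} [Fintype ι] {v : ι → E} (hv : Orthonormal ℝ v) (a : ι → ℝ) :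
    ‖∑ i, a i • v i‖ ^ 2 = ∑ i, a i ^ 2 := by
  rw [← real_inner_self_eq_norm_sq, sum_inner]
  refine Finset.sum_congr rfl (fun i _ => ?_)
  rw [real_inner_smul_left, hv.inner_right_fintype, sq]

lemma dist_proj_span_le {E : Type*} [NormedAddCommGroup E] [InnerProductSpace ℝ E]
    (u w q : E) (hw : w ≠ 0) (t : ℝ) (hq : q = t • w) :
    ‖u - (⟪u, w⟫ / ⟪w, w⟫) • w‖ ≤ ‖u - q‖ := by
  set c := ⟪u, w⟫ / ⟪w, w⟫ with hc
  have hww : ⟪w, w⟫ ≠ 0 := inner_self_ne_zero.mpr hw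
  have h1 : ⟪u - c • w, w⟫ = 0 := by
    rw [inner_sub_left, real_inner_smul_left, hc, div_mul_cancel₀ _ hww, sub_self]
  have horth : ⟪u - c • w, (c - t) • w⟫ = 0 := by
    rw [real_inner_smul_right, h1, mul_zero]
  have hdec : u - q = (u - c • w) + (c - t) • w := by rw [hq]; module
  have key : ‖u - q‖ ^ 2 = ‖u - c • w‖ ^ 2 + ‖(c - t) • w‖ ^ 2 := by
    rw [hdec, norm_add_sq_real, horth]; ring
  nlinarith [norm_nonneg (u - c • w), norm_nonneg (u - q), sq_nonneg ‖(c - t) • w‖,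
    norm_nonneg ((c - t) • w)]


lemma saad_key {E : Type*} [NormedAddCommGroup E] [InnerProductSpace ℝ E] [FiniteDimensional ℝ E]
    {m : ℕ} (A' : E →ₗ[ℝ] E) (hA' : A'.IsSymmetric)
    (K' : Submodule ℝ E) (hK' : Module.finrank ℝ ↥K' = m)
    (γ δ lam tl : ℝ) (hγ0 : 0 ≤ γ) (hδpos : 0 < δ)
    (hγb : ∀ x : E, ‖(↑(K'.orthogonalProjection (A' (x - ↑(K'.orthogonalProjection x)))) : E)‖
        ≤ γ * ‖x - ↑(K'.orthogonalProjection x)‖)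
    (u : E) (heig : A' u = lam • u)
    (w₀ : E) (hw₀0 : w₀ ≠ 0) (hw₀K : w₀ ∈ K')
    (hw₀R : ∀ v ∈ K', ⟪A' w₀ - tl • w₀, v⟫ = 0)
    (hsep : ∀ (ρ : ℝ) (w : E), w ∈ K' → w ≠ 0 →
        (∀ v ∈ K', ⟪A' w - ρ • w, v⟫ = 0) → ρ ≠ tl → δ ≤ |ρ - lam|) :
    ∃ w : E, w ≠ 0 ∧ w ∈ K' ∧ (∀ v ∈ K', ⟪A' w - tl • w, v⟫ = 0) ∧
      ‖u - (⟪u, w⟫ / ⟪w, w⟫) • w‖ ≤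
        Real.sqrt (1 + γ ^ 2 / δ ^ 2) * ‖u - ↑(K'.orthogonalProjection u)‖ := by
  classical
  -- basic facts about the projection
  have hPsym : ∀ (x : E), ∀ v ∈ K', ⟪(↑(K'.orthogonalProjection x) : E), v⟫ = ⟪x, v⟫ := by
    intro x v hv
    have h0 : ⟪x - ↑(K'.orthogonalProjection x), v⟫ = 0 := K'.starProjection_inner_eq_zero x v hv
    rw [inner_sub_left] at h0
    linarith
  -- the compressed operator T on K'
  obtain ⟨T, hTapp⟩ : ∃ T : ↥K' →ₗ[ℝ] ↥K',
      ∀ x : ↥K', T x = K'.orthogonalProjection (A' ↑x) :=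
    ⟨{ toFun := fun x => K'.orthogonalProjection (A' ↑x)
       map_add' := fun x y => by simp [_root_.map_add]
       map_smul' := fun c x => by simp [_root_.map_smul] }, fun _ => rfl⟩
  have hT : T.IsSymmetric := by
    intro x y
    have h1 : ⟪T x, y⟫ = ⟪A' ↑x, (↑y : E)⟫ := by
      rw [hTapp]; exact hPsym (A' ↑x) ↑y y.2
    have h2 : ⟪T y, x⟫ = ⟪A' ↑y, (↑x : E)⟫ := by
      rw [hTapp]; exact hPsym (A' ↑y) ↑x x.2
    have h3 : ⟪x, T y⟫ = ⟪T y, x⟫ := real_inner_comm _ _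
    rw [h1, h3, h2, hA' x y, real_inner_comm]
  -- Ritz property from eigenvectors of T
  have hritz : ∀ (ρ : ℝ) (x : ↥K'), T x = ρ • x → ∀ v ∈ K', ⟪A' ↑x - ρ • ↑x, v⟫ = 0 := by
    intro ρ x hx v hv
    rw [inner_sub_left, real_inner_smul_left]
    have h1 : ⟪A' ↑x, v⟫ = ⟪(↑(T x) : E), v⟫ := by
      rw [hTapp]; exact (hPsym (A' ↑x) v hv).symm
    rw [h1, hx]
    simp [real_inner_smul_left]
  -- eigenbasis
  obtain ⟨b, μ, hb⟩ : ∃ (b : OrthonormalBasis (Fin m) ℝ ↥K') (μ : Fin m → ℝ),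
      ∀ i, T (b i) = μ i • b i :=
    ⟨hT.eigenvectorBasis hK', hT.eigenvalues hK', fun i => by
      have h := hT.apply_eigenvectorBasis hK' i
      exact_mod_cast h⟩
  have hbne : ∀ i, (↑(b i) : E) ≠ 0 := by
    intro i h
    have := b.orthonormal.1 i
    rw [show ‖b i‖ = ‖(↑(b i) : E)‖ from rfl, h, norm_zero] at this
    norm_num at this
  -- coefficients
  set y : ↥K' := K'.orthogonalProjection u with hy
  set c : Fin m → ℝ := fun i => b.repr y i with hc
  have hysum : ∑ i, c i • b i = y := b.sum_repr y
  set w' : ↥K' := ∑ i, (if μ i = tl then c i else 0) • b i with hw'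
  -- T w' = tl • w'
  have hTw' : T w' = tl • w' := by
    rw [hw', _root_.map_sum, Finset.smul_sum]
    refine Finset.sum_congr rfl (fun i _ => ?_)
    by_cases h : μ i = tl
    · simp only [h, if_pos rfl, _root_.map_smul, hb i, h, smul_smul, mul_comm]
    · simp [h]
  -- Ritz property of w'
  have hw'R : ∀ v ∈ K', ⟪A' ↑w' - tl • ↑w', v⟫ = 0 := hritz tl w' hTw'
  -- the residual z
  have hz : T y - lam • y = ∑ i, (c i * (μ i - lam)) • b i := by
    conv_lhs => rw [← hysum]
    rw [_root_.map_sum, Finset.smul_sum, ← Finset.sum_sub_distrib]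
    refine Finset.sum_congr rfl (fun i _ => ?_)
    rw [_root_.map_smul, hb i, smul_smul, smul_smul, ← sub_smul]
    congr 1; ring
  -- norms via orthonormality
  have hyw'sq : ‖y - w'‖ ^ 2 = ∑ i, (if μ i = tl then 0 else c i) ^ 2 := by
    have : y - w' = ∑ i, (if μ i = tl then 0 else c i) • b i := by
      conv_lhs => rw [← hysum, hw']
      rw [← Finset.sum_sub_distrib]
      refine Finset.sum_congr rfl (fun i _ => ?_)
      rw [← sub_smul]
      by_cases h : μ i = tl <;> simp [h]
    rw [this, norm_sum_sq_orthonormal b.orthonormal]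
  have hzsq : ‖T y - lam • y‖ ^ 2 = ∑ i, (c i * (μ i - lam)) ^ 2 := by
    rw [hz, norm_sum_sq_orthonormal b.orthonormal]
  -- per-term estimate
  have hterm : ∀ i, δ ^ 2 * (if μ i = tl then 0 else c i) ^ 2 ≤ (c i * (μ i - lam)) ^ 2 := by
    intro i
    by_cases h : μ i = tl
    · simp [h, sq_nonneg]
    · have hsep' : δ ≤ |μ i - lam| :=
        hsep (μ i) ↑(b i) (b i).2 (hbne i) (hritz (μ i) (b i) (hb i)) h
      rw [if_neg h]
      have h2 : δ ^ 2 ≤ (μ i - lam) ^ 2 := by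
        have := abs_nonneg (μ i - lam)
        nlinarith [sq_abs (μ i - lam)]
      calc δ ^ 2 * c i ^ 2 = c i ^ 2 * δ ^ 2 := mul_comm _ _
        _ ≤ c i ^ 2 * (μ i - lam) ^ 2 := mul_le_mul_of_nonneg_left h2 (sq_nonneg _)
        _ = (c i * (μ i - lam)) ^ 2 := (mul_pow _ _ 2).symm
  have hsum : δ ^ 2 * ‖y - w'‖ ^ 2 ≤ ‖T y - lam • y‖ ^ 2 := by
    rw [hyw'sq, hzsq, Finset.mul_sum]
    exact Finset.sum_le_sum (fun i _ => hterm i)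
  -- ‖T y - lam • y‖ ≤ γ * ‖u - P u‖
  have hzE : (↑(T y - lam • y) : E) =
      -(↑(K'.orthogonalProjection (A' (u - ↑(K'.orthogonalProjection u)))) : E) := by
    have h1 : (↑(T y - lam • y) : E) = ↑(K'.orthogonalProjection (A' ↑y)) - lam • (↑y : E) := by
      rw [Submodule.coe_sub, Submodule.coe_smul, hTapp]
    have h2 : A' (u - ↑(K'.orthogonalProjection u)) = A' u - A' ↑y := by
      rw [_root_.map_sub, hy]
    have h3 : K'.orthogonalProjection (A' u) = lam • K'.orthogonalProjection u := by
      rw [heig, _root_.map_smul]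
    rw [h1, h2, _root_.map_sub, h3]
    push_cast
    rw [← hy]
    abel
  have hznorm : ‖T y - lam • y‖ ≤ γ * ‖u - ↑(K'.orthogonalProjection u)‖ := by
    have : ‖T y - lam • y‖ = ‖(↑(T y - lam • y) : E)‖ := rfl
    rw [this, hzE, norm_neg]
    exact hγb u
  -- combine: ‖y - w'‖² ≤ (γ²/δ²) ‖u - P u‖²
  have hyw'bound : ‖y - w'‖ ^ 2 ≤ γ ^ 2 / δ ^ 2 * ‖u - ↑(K'.orthogonalProjection u)‖ ^ 2 := by
    have h1 : ‖T y - lam • y‖ ^ 2 ≤ (γ * ‖u - ↑(K'.orthogonalProjection u)‖) ^ 2 :=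
      pow_le_pow_left₀ (norm_nonneg _) hznorm 2
    rw [div_mul_eq_mul_div, le_div_iff₀ (pow_pos hδpos 2)]
    calc ‖y - w'‖ ^ 2 * δ ^ 2 = δ ^ 2 * ‖y - w'‖ ^ 2 := mul_comm _ _
      _ ≤ ‖T y - lam • y‖ ^ 2 := hsum
      _ ≤ (γ * ‖u - ↑(K'.orthogonalProjection u)‖) ^ 2 := h1
      _ = γ ^ 2 * ‖u - ↑(K'.orthogonalProjection u)‖ ^ 2 := mul_pow _ _ 2
  -- Pythagoras
  have hpyth : ‖u - ↑w'‖ ^ 2 =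
      ‖u - ↑(K'.orthogonalProjection u)‖ ^ 2 + ‖y - w'‖ ^ 2 := by
    have hmem : (↑y : E) - ↑w' ∈ K' := sub_mem y.2 w'.2
    have horth : ⟪u - ↑(K'.orthogonalProjection u), (↑y : E) - ↑w'⟫ = 0 :=
      K'.starProjection_inner_eq_zero u _ hmem
    have hdec : u - ↑w' = (u - ↑(K'.orthogonalProjection u)) + ((↑y : E) - ↑w') := by
      rw [← hy]; abel
    have hn : ‖y - w'‖ = ‖(↑y : E) - ↑w'‖ := rfl
    rw [hdec, norm_add_sq_real, horth, hn]
    ring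
  have htot : ‖u - ↑w'‖ ^ 2 ≤
      (1 + γ ^ 2 / δ ^ 2) * ‖u - ↑(K'.orthogonalProjection u)‖ ^ 2 := by
    rw [hpyth]
    have hring : (1 + γ ^ 2 / δ ^ 2) * ‖u - ↑(K'.orthogonalProjection u)‖ ^ 2 =
        ‖u - ↑(K'.orthogonalProjection u)‖ ^ 2 +
          γ ^ 2 / δ ^ 2 * ‖u - ↑(K'.orthogonalProjection u)‖ ^ 2 := by ring
    rw [hring]
    linarith [hyw'bound]
  -- final sqrt bound
  have hfin : ‖u - ↑w'‖ ≤
      Real.sqrt (1 + γ ^ 2 / δ ^ 2) * ‖u - ↑(K'.orthogonalProjection u)‖ := by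
    have h1 : ‖u - (↑w' : E)‖ ≤
        Real.sqrt ((1 + γ ^ 2 / δ ^ 2) * ‖u - ↑(K'.orthogonalProjection u)‖ ^ 2) := by
      rw [Real.le_sqrt (norm_nonneg _) (by positivity)]
      exact htot
    rwa [Real.sqrt_mul (by positivity), Real.sqrt_sq (norm_nonneg _)] at h1
  by_cases hw'0 : (↑w' : E) = 0
  · refine ⟨w₀, hw₀0, hw₀K, hw₀R, ?_⟩
    have h2 := dist_proj_span_le u w₀ 0 hw₀0 0 (by simp)
    calc ‖u - (⟪u, w₀⟫ / ⟪w₀, w₀⟫) • w₀‖ ≤ ‖u - 0‖ := h2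
      _ = ‖u - ↑w'‖ := by rw [hw'0]
      _ ≤ _ := hfin
  · refine ⟨↑w', hw'0, w'.2, hw'R, ?_⟩
    calc ‖u - (⟪u, ↑w'⟫ / ⟪(↑w' : E), ↑w'⟫) • (↑w' : E)‖ ≤ ‖u - ↑w'‖ :=
        dist_proj_span_le u ↑w' ↑w' hw'0 1 (by simp)
      _ ≤ _ := hfin

end SaadAux

/-- Saad's estimate (Theorem 4.6 of Saad) for the orthogonal (Galerkin)
projection method for eigenvalue problems: with
`γ = ‖R_K A (I - R_K)‖₂`, for any eigenpair `(λ, u)` of `A`, if `λ̃` is the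
Ritz value closest to `λ` and `δ > 0` is the distance from `λ` to the other
Ritz values, then there is a Ritz vector `w` associated with `λ̃` such that
`sin θ(u, w) ≤ √(1 + γ²/δ²) · sin θ(u, K)`. -/
theorem stmt0 {n m : ℕ} (A : Matrix (Fin n) (Fin n) ℝ) (hA : A.PosDef)
    (K : Submodule ℝ (Fin n → ℝ)) (hK : Module.finrank ℝ K = m)
    -- `R` is the `L²`-orthogonal projection onto `K`
    (R : (Fin n → ℝ) →ₗ[ℝ] (Fin n → ℝ))
    (hRmem : ∀ x, R x ∈ K)
    (hRproj : ∀ x, ∀ y ∈ K, (R x) ⬝ᵥ y = x ⬝ᵥ y)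
    -- `γ = ‖R_K A (I − R_K)‖₂`, the operator norm induced by `‖·‖₂`
    (γ : ℝ)
    (hγ : γ = sSup ((fun x => l2N (R (A *ᵥ (x - R x)))) '' {x | l2N x = 1}))
    -- `(λ, u)` is an eigenpair of `A` with `u ≠ 0`
    (lam : ℝ) (u : Fin n → ℝ) (hu : u ≠ 0) (heig : A *ᵥ u = lam • u)
    -- the Ritz pairs of `A` on `K`
    (tlam : Fin m → ℝ) (tu : Fin m → (Fin n → ℝ))
    (htu : ∀ j, tu j ∈ K) (htu0 : ∀ j, tu j ≠ 0)
    (hRitz : ∀ j, ∀ v ∈ K, ((A *ᵥ tu j) - tlam j • tu j) ⬝ᵥ v = 0)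
    -- the list `tlam` exhausts the Ritz values of `A` on `K`
    (hRitzAll : ∀ (ρ : ℝ) (w : Fin n → ℝ), w ∈ K → w ≠ 0 →
        (∀ v ∈ K, ((A *ᵥ w) - ρ • w) ⬝ᵥ v = 0) → ∃ j, tlam j = ρ)
    -- `λ̃ = tlam i₀` is the Ritz value closest to `λ`
    (i₀ : Fin m)
    (hclosest : ∀ j, |tlam i₀ - lam| ≤ |tlam j - lam|)
    -- `δ > 0` is (a lower bound for) the distance from `λ` to the Ritz values other than `λ̃`
    (δ : ℝ) (hδpos : 0 < δ)
    (hδ : ∀ j, tlam j ≠ tlam i₀ → δ ≤ |tlam j - lam|) :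
    ∃ w : Fin n → ℝ, w ≠ 0 ∧ w ∈ K ∧
      (∀ v ∈ K, ((A *ᵥ w) - tlam i₀ • w) ⬝ᵥ v = 0) ∧
      sinAngleVec u w ≤ Real.sqrt (1 + γ ^ 2 / δ ^ 2) * sinAngleSub R u := by
  classical
  let e : (Fin n → ℝ) ≃ₗ[ℝ] EuclideanSpace ℝ (Fin n) := (WithLp.linearEquiv 2 ℝ (Fin n → ℝ)).symm
  have h1 : ∀ x : Fin n → ℝ, ∀ i, e x i = x i := fun _ _ => rfl
  have hl2 : ∀ x, l2N x = ‖e x‖ := by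
    intro x
    rw [l2N, EuclideanSpace.norm_eq]
    congr 1
    simp [dotProduct, Real.norm_eq_abs, sq_abs, sq, h1]
  have hdot : ∀ x y : Fin n → ℝ, x ⬝ᵥ y = ⟪e x, e y⟫ := by
    intro x y
    rw [PiLp.inner_apply]
    simp [dotProduct, RCLike.inner_apply, h1, mul_comm]
  have he0 : ∀ x : Fin n → ℝ, e x = 0 → x = 0 := by
    intro x hx
    have := e.map_eq_zero_iff.mp hx
    exact this
  -- the subspace in Euclidean space
  set K' : Submodule ℝ (EuclideanSpace ℝ (Fin n)) := K.map e.toLinearMap with hK'def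
  have hK'rank : Module.finrank ℝ ↥K' = m := by
    rw [hK'def]
    rw [show (e.toLinearMap : (Fin n → ℝ) →ₗ[ℝ] EuclideanSpace ℝ (Fin n)) = (e : (Fin n → ℝ) →ₗ[ℝ] EuclideanSpace ℝ (Fin n)) from rfl]
    rw [LinearEquiv.finrank_map_eq e K]
    exact hK
  have hmemK' : ∀ x ∈ K, e x ∈ K' := fun x hx => Submodule.mem_map_of_mem hx
  have hmemK'' : ∀ z ∈ K', ∃ x ∈ K, e x = z := by
    intro z hz
    rcases Submodule.mem_map.mp hz with ⟨x, hx, hex⟩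
    exact ⟨x, hx, hex⟩
  -- the operator
  let A' : EuclideanSpace ℝ (Fin n) →ₗ[ℝ] EuclideanSpace ℝ (Fin n) :=
    e.toLinearMap ∘ₗ A.mulVecLin ∘ₗ e.symm.toLinearMap
  have hA'app : ∀ x : Fin n → ℝ, A' (e x) = e (A *ᵥ x) := by
    intro x
    show e (A *ᵥ (e.symm (e x))) = e (A *ᵥ x)
    rw [e.symm_apply_apply]
  have hsymA : Aᵀ = A := by
    have h := hA.1
    ext i j
    have := congrFun (congrFun h i) j
    simpa using this
  have hAT : ∀ a b : Fin n → ℝ, (A *ᵥ a) ⬝ᵥ b = a ⬝ᵥ (A *ᵥ b) := by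
    intro a b
    calc (A *ᵥ a) ⬝ᵥ b = b ⬝ᵥ (A *ᵥ a) := dotProduct_comm _ _
      _ = (b ᵥ* A) ⬝ᵥ a := dotProduct_mulVec b A a
      _ = (A *ᵥ b) ⬝ᵥ a := by rw [← mulVec_transpose, hsymA]
      _ = a ⬝ᵥ (A *ᵥ b) := dotProduct_comm _ _
  have hA'sym : A'.IsSymmetric := by
    intro x y
    rw [← e.apply_symm_apply x, ← e.apply_symm_apply y, hA'app, hA'app, ← hdot, ← hdot, hAT]
  -- bridge for R
  have hRP : ∀ x : Fin n → ℝ,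
      (↑(K'.orthogonalProjection (e x)) : EuclideanSpace ℝ (Fin n)) = e (R x) := by
    intro x
    apply Submodule.eq_starProjection_of_mem_of_inner_eq_zero (hmemK' _ (hRmem x))
    intro w hw
    obtain ⟨v, hv, rfl⟩ := hmemK'' w hw
    have h2 : (x - R x) ⬝ᵥ v = 0 := by
      rw [sub_dotProduct, hRproj x v hv, sub_self]
    calc ⟪e x - e (R x), e v⟫ = ⟪e (x - R x), e v⟫ := by rw [_root_.map_sub]
      _ = (x - R x) ⬝ᵥ v := (hdot _ _).symm
      _ = 0 := h2
  -- idempotence of R on K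
  have hRid : ∀ z ∈ K, R z = z := by
    intro z hz
    have hmem : R z - z ∈ K := sub_mem (hRmem z) hz
    have h0 : (R z - z) ⬝ᵥ (R z - z) = 0 := by
      rw [sub_dotProduct, hRproj z (R z - z) hmem, sub_self]
    have h2 : e (R z - z) = 0 := by
      have h3 : ⟪e (R z - z), e (R z - z)⟫ = (0 : ℝ) := by rw [← hdot]; exact h0
      exact inner_self_eq_zero.mp h3
    have := he0 _ h2
    exact sub_eq_zero.mp this
  -- positivity of l2N
  have hl2pos : ∀ x : Fin n → ℝ, x ≠ 0 → 0 < l2N x := by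
    intro x hx
    rw [hl2]
    exact norm_pos_iff.mpr (fun h => hx (he0 x h))
  have hl2smul : ∀ (t : ℝ) (x : Fin n → ℝ), l2N (t • x) = |t| * l2N x := by
    intro t x
    rw [hl2, _root_.map_smul, norm_smul, hl2, Real.norm_eq_abs]
  have hu2 : 0 < l2N u := hl2pos u hu
  -- gamma
  set S : Set (Fin n → ℝ) := {x | l2N x = 1} with hSdef
  set f : (Fin n → ℝ) → ℝ := fun x => l2N (R (A *ᵥ (x - R x))) with hfdef
  have hfnn : ∀ x, 0 ≤ f x := fun x => Real.sqrt_nonneg _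
  let g : (Fin n → ℝ) →ₗ[ℝ] (Fin n → ℝ) := R ∘ₗ A.mulVecLin ∘ₗ (LinearMap.id - R)
  have hgapp : ∀ x, g x = R (A *ᵥ (x - R x)) := fun x => rfl
  have hgc : Continuous g := g.continuous_of_finiteDimensional
  have hec : Continuous e := e.toLinearMap.continuous_of_finiteDimensional
  have hl2c : Continuous (l2N : (Fin n → ℝ) → ℝ) := by
    have h : (l2N : (Fin n → ℝ) → ℝ) = fun x => ‖e x‖ := funext hl2
    rw [h]; exact hec.norm
  have hfc : Continuous f := by
    have h : f = fun x => l2N (g x) := by funext x; rw [hfdef]; simp [hgapp]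
    rw [h]; exact hl2c.comp hgc
  have hScl : IsClosed S := IsClosed.preimage hl2c isClosed_singleton
  have hSsub : S ⊆ Metric.closedBall 0 1 := by
    intro x hx
    rw [Metric.mem_closedBall, dist_zero_right]
    rw [pi_norm_le_iff_of_nonneg zero_le_one]
    intro i
    have hxi : x i * x i ≤ x ⬝ᵥ x := by
      rw [dotProduct]
      exact Finset.single_le_sum (f := fun j => x j * x j)
        (fun j _ => mul_self_nonneg (x j)) (Finset.mem_univ i)
    have h2 : |x i| ≤ l2N x := by
      rw [l2N, ← Real.sqrt_mul_self_eq_abs]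
      exact Real.sqrt_le_sqrt hxi
    have hx1 : l2N x = 1 := hx
    rw [Real.norm_eq_abs]
    rw [hx1] at h2
    exact h2
  have hScomp : IsCompact S := (isCompact_closedBall 0 1).of_isClosed_subset hScl hSsub
  have hbdd : BddAbove (f '' S) := hScomp.bddAbove_image hfc.continuousOn
  have hSne : S.Nonempty := by
    refine ⟨(l2N u)⁻¹ • u, ?_⟩
    show l2N ((l2N u)⁻¹ • u) = 1
    rw [hl2smul, abs_of_pos (inv_pos.mpr hu2), inv_mul_cancel₀ (ne_of_gt hu2)]
  have hγ0 : 0 ≤ γ := by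
    obtain ⟨x, hx⟩ := hSne
    rw [hγ]
    exact le_trans (hfnn x) (le_csSup hbdd ⟨x, hx, rfl⟩)
  have hγf : ∀ x ∈ S, f x ≤ γ := fun x hx => hγ ▸ le_csSup hbdd ⟨x, hx, rfl⟩
  have hγb : ∀ x : Fin n → ℝ, l2N (R (A *ᵥ (x - R x))) ≤ γ * l2N (x - R x) := by
    intro x
    by_cases h0 : x - R x = 0
    · rw [h0]
      have : l2N (R (A *ᵥ (0 : Fin n → ℝ))) = 0 := by
        rw [Matrix.mulVec_zero, _root_.map_zero]
        simp [l2N]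
      rw [this]
      have : l2N (0 : Fin n → ℝ) = 0 := by simp [l2N]
      rw [this, mul_zero]
    · set t := l2N (x - R x) with ht
      have htpos : 0 < t := hl2pos _ h0
      have hxS : t⁻¹ • (x - R x) ∈ S := by
        show l2N (t⁻¹ • (x - R x)) = 1
        rw [hl2smul, abs_of_pos (inv_pos.mpr htpos), ← ht, inv_mul_cancel₀ (ne_of_gt htpos)]
      have hRfix : R (t⁻¹ • (x - R x)) = 0 := by
        rw [_root_.map_smul, _root_.map_sub, hRid (R x) (hRmem x), sub_self, smul_zero]
      have hfval : f (t⁻¹ • (x - R x)) = t⁻¹ * l2N (R (A *ᵥ (x - R x))) := by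
        show l2N (R (A *ᵥ (t⁻¹ • (x - R x) - R (t⁻¹ • (x - R x))))) = _
        rw [hRfix, sub_zero, Matrix.mulVec_smul, _root_.map_smul, hl2smul,
          abs_of_pos (inv_pos.mpr htpos)]
      have hle := hγf _ hxS
      rw [hfval, inv_mul_eq_div] at hle
      exact (div_le_iff₀ htpos).mp hle
  -- abstract gamma bound
  have hγbE : ∀ x : EuclideanSpace ℝ (Fin n),
      ‖(↑(K'.orthogonalProjection (A' (x - ↑(K'.orthogonalProjection x)))) :
        EuclideanSpace ℝ (Fin n))‖ ≤ γ * ‖x - ↑(K'.orthogonalProjection x)‖ := by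
    intro x
    rw [← e.apply_symm_apply x]
    set a := e.symm x with ha
    rw [hRP a, ← _root_.map_sub e, hA'app, hRP, ← hl2, ← hl2]
    exact hγb a
  -- Ritz translation
  have hRitzE : ∀ (ρ : ℝ) (a : Fin n → ℝ),
      (∀ v ∈ K, ((A *ᵥ a) - ρ • a) ⬝ᵥ v = 0) ↔
      (∀ w ∈ K', ⟪A' (e a) - ρ • e a, w⟫ = 0) := by
    intro ρ a
    have hkey : ∀ v : Fin n → ℝ, ⟪A' (e a) - ρ • e a, e v⟫ = ((A *ᵥ a) - ρ • a) ⬝ᵥ v := by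
      intro v
      rw [hA'app, ← _root_.map_smul e, ← _root_.map_sub e, ← hdot]
    constructor
    · intro h w hw
      obtain ⟨v, hv, rfl⟩ := hmemK'' w hw
      rw [hkey]; exact h v hv
    · intro h v hv
      rw [← hkey]; exact h (e v) (hmemK' v hv)
  -- separation
  have hsepE : ∀ (ρ : ℝ) (w : EuclideanSpace ℝ (Fin n)), w ∈ K' → w ≠ 0 →
      (∀ v ∈ K', ⟪A' w - ρ • w, v⟫ = 0) → ρ ≠ tlam i₀ → δ ≤ |ρ - lam| := by
    intro ρ w hwK hw0 hwR hρ
    obtain ⟨a, haK, rfl⟩ := hmemK'' w hwK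
    have ha0 : a ≠ 0 := fun h => hw0 (by rw [h, _root_.map_zero])
    obtain ⟨j, hj⟩ := hRitzAll ρ a haK ha0 ((hRitzE ρ a).mpr hwR)
    have := hδ j (by rw [hj]; exact hρ)
    rwa [hj] at this
  have heigE : A' (e u) = lam • (e u) := by rw [hA'app, heig, _root_.map_smul]
  have hw₀0 : e (tu i₀) ≠ 0 := fun h => htu0 i₀ (he0 _ h)
  -- apply the key lemma
  obtain ⟨w', hw'0, hw'K, hw'R, hw'bound⟩ :=
    saad_key A' hA'sym K' hK'rank γ δ lam (tlam i₀) hγ0 hδpos hγbE (e u) heigE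
      (e (tu i₀)) hw₀0 (hmemK' _ (htu i₀)) ((hRitzE _ _).mp (hRitz i₀)) hsepE
  obtain ⟨w, hwK, rfl⟩ := hmemK'' w' hw'K
  refine ⟨w, fun h => hw'0 (by rw [h, _root_.map_zero]), hwK, (hRitzE _ _).mpr hw'R, ?_⟩
  rw [sinAngleVec, sinAngleSub]
  have hnum : l2N (u - ((u ⬝ᵥ w) / (w ⬝ᵥ w)) • w) =
      ‖e u - (⟪e u, e w⟫ / ⟪e w, e w⟫ : ℝ) • e w‖ := by
    rw [hl2, _root_.map_sub, _root_.map_smul, hdot u w, hdot w w]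
  have hden : l2N (u - R u) = ‖e u - ↑(K'.orthogonalProjection (e u))‖ := by
    rw [hl2, _root_.map_sub, hRP]
  rw [hnum, hden, ← mul_div_assoc, div_eq_mul_inv, div_eq_mul_inv]
  exact mul_le_mul_of_nonneg_right hw'bound (inv_nonneg.mpr hu2.le)
end

section
/- Let (λ, u) be an exact eigenpair of A and let i ∈ {1,…,m} be such that δ_i := min_{j≠i, 1≤j≤m} |μ̃_j − μ| > 0, where μ = 1/λ. Let E_m^{(i)} be the A-orthogonal projection onto span{ũ_i}. Then ‖u − E_m^{(i)} u‖_A ≤ √(1 + (μ̃_1/δ_i²) η_K²) · ‖(I − P_K) u‖_A. -/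
open Matrix

section Aux
variable {n : ℕ} {A : Matrix (Fin n) (Fin n) ℝ}

lemma q_symm (hA : A.PosDef) (x y : Fin n → ℝ) : x ⬝ᵥ (A *ᵥ y) = y ⬝ᵥ (A *ᵥ x) := by
  have hT : Aᵀ = A := by
    have := hA.1
    rwa [Matrix.IsHermitian, conjTranspose_eq_transpose_of_trivial] at this
  rw [dotProduct_mulVec, ← mulVec_transpose, hT, dotProduct_comm]

lemma q_nonneg (hA : A.PosDef) (x : Fin n → ℝ) : 0 ≤ x ⬝ᵥ (A *ᵥ x) := by
  simpa using hA.posSemidef.dotProduct_mulVec_nonneg x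

lemma qCS (hA : A.PosDef) (x y : Fin n → ℝ) :
    (x ⬝ᵥ (A *ᵥ y))^2 ≤ (x ⬝ᵥ (A *ᵥ x)) * (y ⬝ᵥ (A *ᵥ y)) := by
  by_cases hy : y = 0
  · simp [hy]
  · set c := y ⬝ᵥ (A *ᵥ y) with hc
    have hcpos : 0 < c := by simpa using hA.dotProduct_mulVec_pos hy
    have h0 : 0 ≤ (c • x - (x ⬝ᵥ (A *ᵥ y)) • y) ⬝ᵥ (A *ᵥ (c • x - (x ⬝ᵥ (A *ᵥ y)) • y)) :=
      q_nonneg hA _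
    have hsymm := q_symm hA x y
    rw [mulVec_sub, mulVec_smul, mulVec_smul, sub_dotProduct, smul_dotProduct,
      smul_dotProduct, dotProduct_sub, dotProduct_sub, dotProduct_smul, dotProduct_smul,
      dotProduct_smul, dotProduct_smul] at h0
    simp only [smul_eq_mul] at h0
    rw [← hsymm] at h0
    nlinarith [h0, hcpos]

lemma aN_sq (hA : A.PosDef) (x : Fin n → ℝ) : (aN A x)^2 = x ⬝ᵥ (A *ᵥ x) :=
  Real.sq_sqrt (q_nonneg hA x)

lemma aN_nonneg (x : Fin n → ℝ) : 0 ≤ aN A x := Real.sqrt_nonneg _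

lemma aN_smul (c : ℝ) (v : Fin n → ℝ) : aN A (c • v) = |c| * aN A v := by
  unfold aN
  rw [mulVec_smul, smul_dotProduct, dotProduct_smul, smul_eq_mul, smul_eq_mul, ← mul_assoc,
    show c * c = |c|^2 by rw [sq_abs]; ring, Real.sqrt_mul (sq_nonneg _),
    Real.sqrt_sq (abs_nonneg c)]

lemma inv_mulVec (hA : A.PosDef) (x : Fin n → ℝ) : A *ᵥ (A⁻¹ *ᵥ x) = x := by
  rw [mulVec_mulVec, Matrix.mul_nonsing_inv _ hA.det_pos.ne'.isUnit, one_mulVec]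

lemma sphere_compact : IsCompact {g : Fin n → ℝ | l2N g = 1} := by
  apply Metric.isCompact_of_isClosed_isBounded
  · have hcont : Continuous fun g : Fin n → ℝ => l2N g := by
      unfold l2N dotProduct
      fun_prop
    exact isClosed_eq hcont continuous_const
  · rw [Metric.isBounded_iff_subset_closedBall 0]
    refine ⟨1, fun g hg => ?_⟩
    simp only [Set.mem_setOf_eq, l2N] at hg
    have h1 : g ⬝ᵥ g = 1 := by
      have hnn : (0:ℝ) ≤ g ⬝ᵥ g := Finset.sum_nonneg fun i _ => mul_self_nonneg _
      nlinarith [Real.sq_sqrt hnn, hg]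
    rw [Metric.mem_closedBall, dist_zero_right]
    rw [pi_norm_le_iff_of_nonneg zero_le_one]
    intro j
    have : g j * g j ≤ 1 := by
      rw [← h1]
      exact Finset.single_le_sum (f := fun k => g k * g k)
        (fun k _ => mul_self_nonneg _) (Finset.mem_univ j)
    rw [Real.norm_eq_abs]
    nlinarith [abs_nonneg (g j), sq_abs (g j)]

lemma aN_continuous : Continuous fun x : Fin n → ℝ => aN A x := by
  unfold aN
  simp only [Matrix.mulVec, dotProduct]
  fun_prop

lemma eta_bdd (P : (Fin n → ℝ) →ₗ[ℝ] (Fin n → ℝ)) :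
    BddAbove ((fun g => aN A ((A⁻¹ *ᵥ g) - P (A⁻¹ *ᵥ g))) '' {g | l2N g = 1}) := by
  apply (sphere_compact.image ?_).bddAbove
  have h1 : Continuous fun g : Fin n → ℝ => (A⁻¹ *ᵥ g) - P (A⁻¹ *ᵥ g) := by
    have hmv : Continuous fun g : Fin n → ℝ => A⁻¹ *ᵥ g :=
      (Matrix.mulVecLin A⁻¹).continuous_of_finiteDimensional
    exact hmv.sub (P.continuous_of_finiteDimensional.comp hmv)
  exact aN_continuous.comp h1

lemma eta_bound (hA : A.PosDef) (P : (Fin n → ℝ) →ₗ[ℝ] (Fin n → ℝ)) (z : Fin n → ℝ) :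
    aN A ((A⁻¹ *ᵥ z) - P (A⁻¹ *ᵥ z)) ≤ etaK A P * l2N z := by
  by_cases hz : z = 0
  · simp [hz, aN, l2N]
  · have hzz : 0 < z ⬝ᵥ z := by
      obtain ⟨j, hj⟩ := Function.ne_iff.mp hz
      exact Finset.sum_pos' (fun k _ => mul_self_nonneg _)
        ⟨j, Finset.mem_univ j, mul_self_pos.mpr hj⟩
    set t := l2N z with ht
    have htpos : 0 < t := Real.sqrt_pos.mpr hzz
    set g := t⁻¹ • z with hg
    have hgs : l2N g = 1 := by
      rw [hg, l2N, smul_dotProduct, dotProduct_smul, smul_eq_mul, smul_eq_mul, ← mul_assoc,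
        show t⁻¹ * t⁻¹ = (t⁻¹)^2 by ring, Real.sqrt_mul (sq_nonneg _),
        Real.sqrt_sq (by positivity), ← l2N, ← ht]
      field_simp
    have hFg : aN A ((A⁻¹ *ᵥ g) - P (A⁻¹ *ᵥ g)) = t⁻¹ * aN A ((A⁻¹ *ᵥ z) - P (A⁻¹ *ᵥ z)) := by
      rw [hg, mulVec_smul, P.map_smul, ← smul_sub, aN_smul, abs_of_pos (by positivity)]
    have hmem : aN A ((A⁻¹ *ᵥ g) - P (A⁻¹ *ᵥ g)) ∈
        ((fun g => aN A ((A⁻¹ *ᵥ g) - P (A⁻¹ *ᵥ g))) '' {g | l2N g = 1}) :=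
      ⟨g, hgs, rfl⟩
    have hle : aN A ((A⁻¹ *ᵥ g) - P (A⁻¹ *ᵥ g)) ≤ etaK A P := le_csSup (eta_bdd P) hmem
    rw [hFg] at hle
    calc aN A ((A⁻¹ *ᵥ z) - P (A⁻¹ *ᵥ z))
        = t * (t⁻¹ * aN A ((A⁻¹ *ᵥ z) - P (A⁻¹ *ᵥ z))) := by field_simp
      _ ≤ t * etaK A P := mul_le_mul_of_nonneg_left hle htpos.le
      _ = etaK A P * t := mul_comm _ _

lemma sum_dotProduct' {m : ℕ} (f : Fin m → (Fin n → ℝ)) (v : Fin n → ℝ) :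
    (∑ j, f j) ⬝ᵥ v = ∑ j, f j ⬝ᵥ v := by
  simp only [dotProduct, Finset.sum_apply, Finset.sum_mul]
  exact Finset.sum_comm

end Aux

set_option maxHeartbeats 1000000 in
/-- Energy-norm error estimate for the subspace projection method
(first part of Theorem 3.1):
`‖u − E_m^{(i)} u‖_A ≤ √(1 + (μ̃_1/δ_i²) η_K²) ‖(I − P_K) u‖_A`. -/
theorem stmt3 {n m : ℕ} (A : Matrix (Fin n) (Fin n) ℝ) (hA : A.PosDef)
    -- `K` is an `m`-dimensional subspace of `ℝⁿ`
    (K : Submodule ℝ (Fin n → ℝ)) (hK : Module.finrank ℝ K = m)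
    -- `P` is the `A`-orthogonal (Galerkin) projection onto `K`
    (P : (Fin n → ℝ) →ₗ[ℝ] (Fin n → ℝ))
    (hPmem : ∀ x, P x ∈ K)
    (hPproj : ∀ x, ∀ y ∈ K, (P x) ⬝ᵥ (A *ᵥ y) = x ⬝ᵥ (A *ᵥ y))
    -- the Ritz pairs `(λ̃_j, ũ_j)` of `A` on `K`, with `A`-orthonormal Ritz vectors
    (tlam : Fin m → ℝ) (tu : Fin m → (Fin n → ℝ)) (htmono : Monotone tlam)
    (htu : ∀ j, tu j ∈ K)
    (hRitz : ∀ j, ∀ v ∈ K, ((A *ᵥ tu j) - tlam j • tu j) ⬝ᵥ v = 0)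
    (htortho : ∀ i j, tu i ⬝ᵥ (A *ᵥ tu j) = if i = j then (1 : ℝ) else 0)
    -- `(λ, u)` is an exact eigenpair of `A`
    (lam : ℝ) (u : Fin n → ℝ) (hu : u ≠ 0) (heig : A *ᵥ u = lam • u)
    -- `δ_i > 0` is (a lower bound for) `min_{j ≠ i} |μ̃_j − μ|` where `μ = 1/λ`, `μ̃_j = 1/λ̃_j`
    (i : Fin m) (δ : ℝ) (hδpos : 0 < δ)
    (hδ : ∀ j : Fin m, j ≠ i → δ ≤ |1 / tlam j - 1 / lam|)
    -- `E` is the `A`-orthogonal projection `E_m^{(i)}` onto `span{ũ_i}`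
    (E : (Fin n → ℝ) →ₗ[ℝ] (Fin n → ℝ))
    (hEmem : ∀ x, E x ∈ Submodule.span ℝ {tu i})
    (hEproj : ∀ x, ∀ y ∈ Submodule.span ℝ {tu i},
      (E x) ⬝ᵥ (A *ᵥ y) = x ⬝ᵥ (A *ᵥ y)) :
    aN A (u - E u) ≤
      Real.sqrt (1 + (1 / tlam ⟨0, i.pos⟩) / δ ^ 2 * (etaK A P) ^ 2) *
        aN A (u - P u) := by
  classical
  have hsym := q_symm hA
  have hq0 := q_nonneg hA
  set i0 : Fin m := ⟨0, i.pos⟩ with hi0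
  -- positivity of Ritz values and dot products among Ritz vectors
  have hRitz' : ∀ j k, tlam j * (tu j ⬝ᵥ tu k) = if k = j then (1:ℝ) else 0 := by
    intro j k
    have h := hRitz j (tu k) (htu k)
    rw [sub_dotProduct, smul_dotProduct, sub_eq_zero] at h
    rw [smul_eq_mul] at h
    rw [← h, dotProduct_comm, htortho]
  have htune : ∀ j, tu j ≠ 0 := by
    intro j hj
    have := htortho j j
    rw [hj] at this
    simp at this
  have htuu : ∀ j, 0 < tu j ⬝ᵥ tu j := by
    intro j
    obtain ⟨k, hk⟩ := Function.ne_iff.mp (htune j)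
    exact Finset.sum_pos' (fun l _ => mul_self_nonneg _)
      ⟨k, Finset.mem_univ k, mul_self_pos.mpr hk⟩
  have htlampos : ∀ j, 0 < tlam j := by
    intro j
    have h := hRitz' j j
    rw [if_pos rfl] at h
    nlinarith [htuu j]
  have hdot : ∀ j k, tu j ⬝ᵥ tu k = if k = j then 1 / tlam j else 0 := by
    intro j k
    have h := hRitz' j k
    by_cases hjk : k = j
    · rw [if_pos hjk] at h ⊢
      rw [eq_div_iff (htlampos j).ne']
      linarith [h]
    · rw [if_neg hjk] at h ⊢
      have := (htlampos j).ne'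
      rcases mul_eq_zero.mp h with h' | h'
      · exact absurd h' this
      · exact h'
  -- eigenvalue positive
  have huu : 0 < u ⬝ᵥ u := by
    obtain ⟨k, hk⟩ := Function.ne_iff.mp hu
    exact Finset.sum_pos' (fun l _ => mul_self_nonneg _)
      ⟨k, Finset.mem_univ k, mul_self_pos.mpr hk⟩
  have hlam : 0 < lam := by
    have h := hA.dotProduct_mulVec_pos hu
    rw [heig] at h
    simp only [dotProduct_smul, smul_eq_mul, star_trivial] at h
    nlinarith [huu]
  -- spanning of K by the Ritz vectors
  have hspan : ∀ y ∈ K, ∃ a : Fin m → ℝ, y = ∑ j, a j • tu j := by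
    have hli : LinearIndependent ℝ (fun j => (⟨tu j, htu j⟩ : K)) := by
      rw [Fintype.linearIndependent_iff]
      intro a ha k
      have ha' : ∑ j, a j • tu j = 0 := by
        have := congrArg (Subtype.val) ha
        simpa using this
      have h2 := congrArg (fun y => y ⬝ᵥ (A *ᵥ tu k)) ha'
      simp only [zero_dotProduct] at h2
      rw [sum_dotProduct] at h2
      simp only [smul_dotProduct, smul_eq_mul, htortho, mul_ite, mul_one, mul_zero,
        Finset.sum_ite_eq', Finset.mem_univ, if_pos] at h2
      exact h2
    have hcard : Fintype.card (Fin m) = Module.finrank ℝ K := by simp [hK]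
    have hsp := hli.span_eq_top_of_card_eq_finrank' hcard
    intro y hy
    have hmem : (⟨y, hy⟩ : K) ∈ Submodule.span ℝ (Set.range fun j => (⟨tu j, htu j⟩ : K)) := by
      rw [hsp]; trivial
    rw [Submodule.mem_span_range_iff_exists_fun] at hmem
    obtain ⟨a, ha⟩ := hmem
    refine ⟨a, ?_⟩
    have := congrArg (Subtype.val) ha
    simpa using this.symm
  -- coefficient extraction
  have hcoefA : ∀ (a : Fin m → ℝ) (k : Fin m), (∑ j, a j • tu j) ⬝ᵥ (A *ᵥ tu k) = a k := by
    intro a k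
    rw [sum_dotProduct]
    simp only [smul_dotProduct, smul_eq_mul, htortho, mul_ite, mul_one, mul_zero,
      Finset.sum_ite_eq', Finset.mem_univ, if_pos]
  have hqexp : ∀ a : Fin m → ℝ,
      (∑ j, a j • tu j) ⬝ᵥ (A *ᵥ (∑ j, a j • tu j)) = ∑ j, a j * a j := by
    intro a
    rw [hsym, sum_dotProduct]
    refine Finset.sum_congr rfl fun j _ => ?_
    rw [smul_dotProduct, smul_eq_mul, hsym, hcoefA]
  have hdexp : ∀ a : Fin m → ℝ,
      (∑ j, a j • tu j) ⬝ᵥ (∑ j, a j • tu j) = ∑ j, a j * a j * (1 / tlam j) := by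
    intro a
    rw [sum_dotProduct]
    refine Finset.sum_congr rfl fun j _ => ?_
    rw [smul_dotProduct, smul_eq_mul, dotProduct_comm, sum_dotProduct]
    simp only [smul_dotProduct, smul_eq_mul, hdot, mul_ite, mul_zero,
      Finset.sum_ite_eq', Finset.sum_ite_eq, Finset.mem_univ, if_pos, if_true, one_div]
    ring
  -- main objects
  set e : Fin n → ℝ := u - P u with he
  set w : Fin n → ℝ := P u - E u with hw
  set v : Fin n → ℝ := A⁻¹ *ᵥ e with hv
  set z : Fin n → ℝ := P v with hz
  have heperp : ∀ y ∈ K, e ⬝ᵥ (A *ᵥ y) = 0 := by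
    intro y hy
    rw [he, sub_dotProduct, hPproj u y hy, sub_self]
  have hsKle : Submodule.span ℝ {tu i} ≤ K := by
    rw [Submodule.span_le, Set.singleton_subset_iff]
    exact htu i
  have hwK : w ∈ K := K.sub_mem (hPmem u) (hsKle (hEmem u))
  obtain ⟨c, hwc⟩ := hspan w hwK
  have hck : ∀ k, c k = w ⬝ᵥ (A *ᵥ tu k) := by
    intro k
    rw [hwc, hcoefA]
  have hci : c i = 0 := by
    rw [hck, hw, sub_dotProduct, hPproj u (tu i) (htu i),
      hEproj u (tu i) (Submodule.mem_span_singleton_self _), sub_self]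
  have htuje : ∀ j, j ≠ i → tu j ⬝ᵥ e = (1 / lam - 1 / tlam j) * c j := by
    intro j hj
    obtain ⟨β, hβ⟩ := Submodule.mem_span_singleton.mp (hEmem u)
    have hEzero : E u ⬝ᵥ (A *ᵥ tu j) = 0 := by
      rw [← hβ, smul_dotProduct, htortho, if_neg (Ne.symm hj), smul_zero]
    have hcj : c j = u ⬝ᵥ (A *ᵥ tu j) := by
      rw [hck, hw, sub_dotProduct, hEzero, sub_zero, hPproj u (tu j) (htu j)]
    have hcj' : c j = P u ⬝ᵥ (A *ᵥ tu j) := by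
      rw [hck, hw, sub_dotProduct, hEzero, sub_zero]
    have h1 : tu j ⬝ᵥ u = c j / lam := by
      have hthis : c j = lam * (tu j ⬝ᵥ u) := by
        rw [hcj, hsym, heig, dotProduct_smul, smul_eq_mul]
      rw [eq_div_iff hlam.ne', hthis]; ring
    have h2 : tu j ⬝ᵥ P u = c j / tlam j := by
      have h := hRitz j (P u) (hPmem u)
      rw [sub_dotProduct, smul_dotProduct, sub_eq_zero, smul_eq_mul] at h
      have hthis : c j = tlam j * (tu j ⬝ᵥ P u) := by
        rw [hcj', dotProduct_comm, h]
      rw [eq_div_iff (htlampos j).ne', hthis]; ring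
    rw [he, dotProduct_sub, h1, h2]
    field_simp [(htlampos j).ne', hlam.ne']
  -- z expansion
  have hzK : z ∈ K := hPmem v
  obtain ⟨b, hzb⟩ := hspan z hzK
  have hAve : A *ᵥ v = e := inv_mulVec hA e
  have hbk : ∀ k, b k = tu k ⬝ᵥ e := by
    intro k
    have h1 : b k = z ⬝ᵥ (A *ᵥ tu k) := by rw [hzb, hcoefA]
    rw [h1, hz, hPproj v (tu k) (htu k), hsym, hAve]
  have hqzz : z ⬝ᵥ (A *ᵥ z) = e ⬝ᵥ z := by
    rw [hz]
    rw [hPproj v (P v) (hPmem v), hsym, hAve, dotProduct_comm]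
  have hsumb : ∑ j, b j * b j = e ⬝ᵥ z := by
    rw [← hqzz]
    rw [hzb, hqexp]
  have ht0 : 0 ≤ e ⬝ᵥ z := hqzz ▸ hq0 z
  -- z dot z bound
  have hzzb : z ⬝ᵥ z ≤ (1 / tlam i0) * (e ⬝ᵥ z) := by
    rw [hzb, hdexp, ← hzb, ← hsumb, Finset.mul_sum]
    refine Finset.sum_le_sum fun j _ => ?_
    have hle : 1 / tlam j ≤ 1 / tlam i0 :=
      one_div_le_one_div_of_le (htlampos i0) (htmono (by simp [hi0, Fin.le_def]))
    nlinarith [mul_self_nonneg (b j), hle]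
  -- eta estimate
  set s : Fin n → ℝ := (A⁻¹ *ᵥ z) - P (A⁻¹ *ᵥ z) with hs
  have hse : s ⬝ᵥ (A *ᵥ e) = e ⬝ᵥ z := by
    rw [hs, sub_dotProduct]
    rw [show (P (A⁻¹ *ᵥ z)) ⬝ᵥ (A *ᵥ e) = 0 by
      rw [hsym]; exact heperp _ (hPmem _)]
    rw [sub_zero, hsym, inv_mulVec hA]
  have hsA : s ⬝ᵥ (A *ᵥ s) ≤ (etaK A P)^2 * (z ⬝ᵥ z) := by
    have h1 : aN A s ≤ etaK A P * l2N z := eta_bound hA P z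
    have h2 : (aN A s)^2 ≤ (etaK A P * l2N z)^2 :=
      pow_le_pow_left₀ (aN_nonneg s) h1 2
    rw [aN_sq hA] at h2
    calc s ⬝ᵥ (A *ᵥ s) ≤ (etaK A P * l2N z)^2 := h2
      _ = (etaK A P)^2 * (l2N z)^2 := by ring
      _ = (etaK A P)^2 * (z ⬝ᵥ z) := by
          have hzdnn : (0:ℝ) ≤ z ⬝ᵥ z := Finset.sum_nonneg fun l _ => mul_self_nonneg _
          rw [l2N, Real.sq_sqrt hzdnn]
  have hqee : 0 ≤ e ⬝ᵥ (A *ᵥ e) := hq0 e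
  have hez2 : (e ⬝ᵥ z)^2 ≤ (etaK A P)^2 * ((1 / tlam i0) * (e ⬝ᵥ z)) * (e ⬝ᵥ (A *ᵥ e)) := by
    have hCS := qCS hA s e
    rw [hse] at hCS
    have h3 : s ⬝ᵥ (A *ᵥ s) ≤ (etaK A P)^2 * ((1 / tlam i0) * (e ⬝ᵥ z)) := by
      refine hsA.trans ?_
      exact mul_le_mul_of_nonneg_left hzzb (sq_nonneg _)
    nlinarith [hq0 s, hqee, h3, hCS]
  have hkey : e ⬝ᵥ z ≤ (1 / tlam i0) * (etaK A P)^2 * (e ⬝ᵥ (A *ᵥ e)) := by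
    rcases eq_or_lt_of_le ht0 with h | h
    · rw [← h]
      exact mul_nonneg (mul_nonneg (one_div_nonneg.mpr (htlampos i0).le) (sq_nonneg _)) hqee
    · nlinarith [hez2, h]
  -- Pythagoras
  have hqEu : (u - E u) ⬝ᵥ (A *ᵥ (u - E u)) = e ⬝ᵥ (A *ᵥ e) + w ⬝ᵥ (A *ᵥ w) := by
    have hsplit : u - E u = e + w := by rw [he, hw, sub_add_sub_cancel]
    rw [hsplit, add_dotProduct, mulVec_add, dotProduct_add, dotProduct_add]
    rw [heperp w hwK, hsym w e, heperp w hwK]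
    ring
  -- bound on w
  have hqww : w ⬝ᵥ (A *ᵥ w) = ∑ j, c j * c j := by rw [hwc, hqexp]
  have hwbound : δ^2 * (w ⬝ᵥ (A *ᵥ w)) ≤ e ⬝ᵥ z := by
    rw [hqww, ← hsumb, Finset.mul_sum]
    refine Finset.sum_le_sum fun j _ => ?_
    by_cases hj : j = i
    · rw [hj, hci]
      simpa using mul_self_nonneg (b i)
    · rw [hbk, htuje j hj]
      have habs := hδ j hj
      have h1 : δ^2 ≤ (1 / tlam j - 1 / lam)^2 := by
        calc δ^2 ≤ |1 / tlam j - 1 / lam|^2 := pow_le_pow_left₀ hδpos.le habs 2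
          _ = (1 / tlam j - 1 / lam)^2 := sq_abs _
      nlinarith [mul_self_nonneg (c j), h1]
  -- conclude
  set C : ℝ := 1 + (1 / tlam i0) / δ ^ 2 * (etaK A P) ^ 2 with hC
  have hfinal : (u - E u) ⬝ᵥ (A *ᵥ (u - E u)) ≤ C * (e ⬝ᵥ (A *ᵥ e)) := by
    rw [hqEu, hC]
    have hδ2 : (0:ℝ) < δ^2 := by positivity
    have hw2 : w ⬝ᵥ (A *ᵥ w) ≤ (1 / tlam i0) / δ^2 * (etaK A P)^2 * (e ⬝ᵥ (A *ᵥ e)) := by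
      have h4 : δ^2 * (w ⬝ᵥ (A *ᵥ w)) ≤
          δ^2 * ((1 / tlam i0) / δ^2 * (etaK A P)^2 * (e ⬝ᵥ (A *ᵥ e))) := by
        calc δ^2 * (w ⬝ᵥ (A *ᵥ w)) ≤ e ⬝ᵥ z := hwbound
          _ ≤ (1 / tlam i0) * (etaK A P)^2 * (e ⬝ᵥ (A *ᵥ e)) := hkey
          _ = δ^2 * ((1 / tlam i0) / δ^2 * (etaK A P)^2 * (e ⬝ᵥ (A *ᵥ e))) := by
              have h5 : (1 / tlam i0) / δ^2 * (etaK A P)^2 * (e ⬝ᵥ (A *ᵥ e))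
                  = ((1 / tlam i0) * (etaK A P)^2 * (e ⬝ᵥ (A *ᵥ e))) / δ^2 := by ring
              rw [h5, ← mul_div_assoc, mul_div_cancel_left₀ _ hδ2.ne']
      exact le_of_mul_le_mul_left h4 hδ2
    have hexp : (1 + 1 / tlam i0 / δ ^ 2 * etaK A P ^ 2) * (e ⬝ᵥ (A *ᵥ e))
        = e ⬝ᵥ (A *ᵥ e) + 1 / tlam i0 / δ ^ 2 * etaK A P ^ 2 * (e ⬝ᵥ (A *ᵥ e)) := by
      ring
    rw [hexp]
    linarith [hw2]
  have hCnn : 0 ≤ C := by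
    rw [hC]
    have := htlampos i0
    positivity
  calc aN A (u - E u) = Real.sqrt ((u - E u) ⬝ᵥ (A *ᵥ (u - E u))) := rfl
    _ ≤ Real.sqrt (C * (e ⬝ᵥ (A *ᵥ e))) := Real.sqrt_le_sqrt hfinal
    _ = Real.sqrt C * Real.sqrt (e ⬝ᵥ (A *ᵥ e)) := Real.sqrt_mul hCnn _
    _ = Real.sqrt C * aN A (u - P u) := by rw [aN, ← he]
end

section
/- (Duality-type estimate.) For every x ∈ ℝ^n one has ‖(I − P_K) x‖₂ ≤ η_K · ‖(I − P_K) x‖_A. -/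
open Matrix

-- quadratic-form nonnegativity
lemma qnn {n : ℕ} {A : Matrix (Fin n) (Fin n) ℝ} (hA : A.PosDef) (x : Fin n → ℝ) :
    0 ≤ x ⬝ᵥ (A *ᵥ x) := by
  simpa using hA.posSemidef.dotProduct_mulVec_nonneg x

-- symmetry of the form
lemma qsymm {n : ℕ} {A : Matrix (Fin n) (Fin n) ℝ} (hA : A.PosDef) (x y : Fin n → ℝ) :
    x ⬝ᵥ (A *ᵥ y) = y ⬝ᵥ (A *ᵥ x) := by
  have h := hA.1
  rw [Matrix.IsHermitian] at h
  calc x ⬝ᵥ (A *ᵥ y) = (x ᵥ* A) ⬝ᵥ y := (Matrix.dotProduct_mulVec x A y)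
    _ = (Aᵀ *ᵥ x) ⬝ᵥ y := by rw [Matrix.mulVec_transpose]
    _ = y ⬝ᵥ (A *ᵥ x) := by
        rw [dotProduct_comm]
        congr 1
        conv_rhs => rw [← h]
        rfl

-- Cauchy–Schwarz for the energy form
lemma csA {n : ℕ} {A : Matrix (Fin n) (Fin n) ℝ} (hA : A.PosDef) (x y : Fin n → ℝ) :
    x ⬝ᵥ (A *ᵥ y) ≤ aN A x * aN A y := by
  have key : (2 * (x ⬝ᵥ (A *ᵥ y)))^2 - 4 * (x ⬝ᵥ (A *ᵥ x)) * (y ⬝ᵥ (A *ᵥ y)) ≤ 0 := by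
    have h := discrim_le_zero (a := y ⬝ᵥ (A *ᵥ y)) (b := 2 * (x ⬝ᵥ (A *ᵥ y)))
      (c := x ⬝ᵥ (A *ᵥ x)) ?_
    · rw [discrim] at h
      nlinarith [h]
    · intro t
      have h0 := qnn hA (x + t • y)
      have expand : (x + t • y) ⬝ᵥ (A *ᵥ (x + t • y)) =
          (y ⬝ᵥ (A *ᵥ y)) * (t * t) + (2 * (x ⬝ᵥ (A *ᵥ y))) * t + x ⬝ᵥ (A *ᵥ x) := by
        rw [Matrix.mulVec_add, Matrix.mulVec_smul, dotProduct_add,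
          add_dotProduct, add_dotProduct, dotProduct_smul,
          smul_dotProduct, smul_dotProduct, dotProduct_smul,
          qsymm hA y x]
        simp only [smul_eq_mul]
        ring
      linarith [expand ▸ h0]
  have hx := Real.sq_sqrt (qnn hA x)
  have hy := Real.sq_sqrt (qnn hA y)
  have hnn : 0 ≤ aN A x * aN A y := mul_nonneg (Real.sqrt_nonneg _) (Real.sqrt_nonneg _)
  unfold aN at *
  nlinarith [key, hx, hy, hnn]

/-- Duality-type estimate (3.12): for every `x ∈ ℝⁿ`,
`‖(I − P_K) x‖₂ ≤ η_K ‖(I − P_K) x‖_A`. -/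
theorem stmt9 {n : ℕ} (A : Matrix (Fin n) (Fin n) ℝ) (hA : A.PosDef)
    (K : Submodule ℝ (Fin n → ℝ))
    -- `P` is the `A`-orthogonal (Galerkin) projection onto `K`
    (P : (Fin n → ℝ) →ₗ[ℝ] (Fin n → ℝ))
    (hPmem : ∀ x, P x ∈ K)
    (hPproj : ∀ x, ∀ y ∈ K, (P x) ⬝ᵥ (A *ᵥ y) = x ⬝ᵥ (A *ᵥ y)) :
    ∀ x : Fin n → ℝ, l2N (x - P x) ≤ etaK A P * aN A (x - P x) := by
  intro x
  have hdet : IsUnit A.det := isUnit_iff_ne_zero.mpr hA.det_pos.ne'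
  have hAAinv : ∀ g : Fin n → ℝ, A *ᵥ (A⁻¹ *ᵥ g) = g := by
    intro g
    rw [Matrix.mulVec_mulVec, Matrix.mul_nonsing_inv A hdet, Matrix.one_mulVec]
  set e := x - P x with he
  have horth : ∀ y ∈ K, e ⬝ᵥ (A *ᵥ y) = 0 := by
    intro y hy
    rw [he, sub_dotProduct, hPproj x y hy, sub_self]
  -- BddAbove of the sup set
  have hdnn : ∀ v : Fin n → ℝ, 0 ≤ v ⬝ᵥ v := by
    intro v
    exact Finset.sum_nonneg fun i _ => mul_self_nonneg (v i)
  have hcontdot : ∀ B : Matrix (Fin n) (Fin n) ℝ,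
      Continuous fun v : Fin n → ℝ => v ⬝ᵥ (B *ᵥ v) := by
    intro B
    have : Continuous fun v : Fin n → ℝ => ∑ i, v i * (B *ᵥ v) i := by
      apply continuous_finset_sum
      intro i _
      exact (continuous_apply i).mul
        ((continuous_apply i).comp B.mulVecLin.continuous_of_finiteDimensional)
    simpa [dotProduct] using this
  have hSphereCompact : IsCompact {g : Fin n → ℝ | l2N g = 1} := by
    have hset : {g : Fin n → ℝ | l2N g = 1} = {g : Fin n → ℝ | g ⬝ᵥ g = 1} := by
      ext g
      simp only [Set.mem_setOf_eq, l2N]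
      constructor
      · intro h
        have := congrArg (fun t => t ^ 2) h
        simpa [Real.sq_sqrt (hdnn g)] using this
      · intro h; rw [h, Real.sqrt_one]
    rw [hset]
    apply Metric.isCompact_of_isClosed_isBounded
    · exact isClosed_eq ((hcontdot 1).congr fun v => by rw [Matrix.one_mulVec]) continuous_const
    · rw [Metric.isBounded_iff_subset_closedBall 0]
      refine ⟨1, fun g hg => ?_⟩
      simp only [Set.mem_setOf_eq] at hg
      rw [Metric.mem_closedBall, dist_zero_right]
      rw [pi_norm_le_iff_of_nonneg zero_le_one]
      intro i
      rw [Real.norm_eq_abs, abs_le_one_iff_mul_self_le_one]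
      calc g i * g i ≤ ∑ j, g j * g j :=
            Finset.single_le_sum (fun j _ => mul_self_nonneg (g j)) (Finset.mem_univ i)
        _ = 1 := hg
  have hbdd : BddAbove ((fun g => aN A ((A⁻¹ *ᵥ g) - P (A⁻¹ *ᵥ g))) '' {g | l2N g = 1}) := by
    apply IsCompact.bddAbove
    apply hSphereCompact.image
    apply Real.continuous_sqrt.comp
    have hlin : Continuous fun g : Fin n → ℝ => (A⁻¹ *ᵥ g) - P (A⁻¹ *ᵥ g) := by
      exact ((A⁻¹).mulVecLin - P ∘ₗ (A⁻¹).mulVecLin).continuous_of_finiteDimensional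
    exact (hcontdot A).comp hlin
  -- main case analysis
  by_cases hz : e = 0
  · rw [hz]
    simp [l2N, aN, Matrix.mulVec_zero]
  · have hee : 0 < e ⬝ᵥ e := by
      rcases lt_or_eq_of_le (hdnn e) with h | h
      · exact h
      · exact absurd (dotProduct_self_eq_zero.mp h.symm) hz
    set m := l2N e with hm
    have hmpos : 0 < m := Real.sqrt_pos.mpr hee
    have hm2 : m ^ 2 = e ⬝ᵥ e := Real.sq_sqrt (hdnn e)
    set g := m⁻¹ • e with hg
    have hgs : l2N g = 1 := by
      rw [l2N, hg, smul_dotProduct, dotProduct_smul, smul_eq_mul, smul_eq_mul,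
        ← hm2]
      rw [show m⁻¹ * (m⁻¹ * m ^ 2) = 1 by field_simp]
      exact Real.sqrt_one
    set w := A⁻¹ *ᵥ g with hw
    set z := w - P w with hzdef
    have hmem : aN A z ∈ ((fun g => aN A ((A⁻¹ *ᵥ g) - P (A⁻¹ *ᵥ g))) '' {g | l2N g = 1}) :=
      ⟨g, hgs, rfl⟩
    have hle : aN A z ≤ etaK A P := le_csSup hbdd hmem
    have heg : e ⬝ᵥ g = m := by
      rw [hg, dotProduct_smul, smul_eq_mul, ← hm2]
      field_simp
    have hkey : e ⬝ᵥ g = e ⬝ᵥ (A *ᵥ z) := by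
      have : e ⬝ᵥ g = e ⬝ᵥ (A *ᵥ w) := by rw [hw, hAAinv]
      rw [this, hzdef, Matrix.mulVec_sub, dotProduct_sub, horth (P w) (hPmem w),
        sub_zero]
    have hcs : e ⬝ᵥ (A *ᵥ z) ≤ aN A e * aN A z := csA hA e z
    have hfin : m ≤ aN A e * etaK A P := by
      have h1 : aN A e * aN A z ≤ aN A e * etaK A P :=
        mul_le_mul_of_nonneg_left hle (Real.sqrt_nonneg _)
      calc m = e ⬝ᵥ (A *ᵥ z) := by rw [← hkey, heg]
        _ ≤ aN A e * aN A z := hcs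
        _ ≤ aN A e * etaK A P := h1
    linarith [hfin]
end

section
/- Let (λ, u) be an exact eigenpair of A (A u = λ u), set μ = 1/λ and μ̃_j = 1/λ̃_j, and assume μ ≠ μ̃_j. Then (P_K u, ũ_j)_A = (1/(μ − μ̃_j)) · (u − P_K u, ũ_j), equivalently (P_K u, ũ_j)_A = (λ̃_j λ/(λ̃_j − λ)) · (u − P_K u, ũ_j). -/
open Matrix

/-- The identity (3.14): for an exact eigenpair `(λ, u)` with `μ = 1/λ ≠ μ̃_j`,
`(P_K u, ũ_j)_A = (1/(μ − μ̃_j)) (u − P_K u, ũ_j)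
             = (λ̃_j λ/(λ̃_j − λ)) (u − P_K u, ũ_j)`. -/
theorem stmt11 {n m : ℕ} (A : Matrix (Fin n) (Fin n) ℝ) (hA : A.PosDef)
    -- `K` is an `m`-dimensional subspace of `ℝⁿ`
    (K : Submodule ℝ (Fin n → ℝ)) (hK : Module.finrank ℝ K = m)
    -- `P` is the `A`-orthogonal (Galerkin) projection onto `K`
    (P : (Fin n → ℝ) →ₗ[ℝ] (Fin n → ℝ))
    (hPmem : ∀ x, P x ∈ K)
    (hPproj : ∀ x, ∀ y ∈ K, (P x) ⬝ᵥ (A *ᵥ y) = x ⬝ᵥ (A *ᵥ y))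
    -- the Ritz pairs `(λ̃_j, ũ_j)` of `A` on `K`, with `A`-orthonormal Ritz vectors
    (tlam : Fin m → ℝ) (tu : Fin m → (Fin n → ℝ)) (htmono : Monotone tlam)
    (htu : ∀ j, tu j ∈ K)
    (hRitz : ∀ j, ∀ v ∈ K, ((A *ᵥ tu j) - tlam j • tu j) ⬝ᵥ v = 0)
    (htortho : ∀ i j, tu i ⬝ᵥ (A *ᵥ tu j) = if i = j then (1 : ℝ) else 0)
    -- `(λ, u)` is an exact eigenpair of `A`
    (lam : ℝ) (u : Fin n → ℝ) (hu : u ≠ 0) (heig : A *ᵥ u = lam • u)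
    (j : Fin m) (hne : 1 / lam ≠ 1 / tlam j) :
    (P u) ⬝ᵥ (A *ᵥ tu j) =
      (1 / (1 / lam - 1 / tlam j)) * ((u - P u) ⬝ᵥ tu j) ∧
    (P u) ⬝ᵥ (A *ᵥ tu j) =
      (tlam j * lam / (tlam j - lam)) * ((u - P u) ⬝ᵥ tu j) := by
    -- symmetry of A in the dot product
  have hsymT : Aᵀ = A := by
    ext i k
    have := congrFun (congrFun hA.isHermitian.eq i) k
    simpa using this
  have hsymm : ∀ x y : Fin n → ℝ, x ⬝ᵥ (A *ᵥ y) = (A *ᵥ x) ⬝ᵥ y := by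
    intro x y
    rw [Matrix.dotProduct_mulVec, ← Matrix.mulVec_transpose, hsymT]
  set s : ℝ := (P u) ⬝ᵥ tu j with hs
  set t : ℝ := u ⬝ᵥ tu j with ht
  -- (P u, ũ)_A = λ̃ s
  have hPA : (P u) ⬝ᵥ (A *ᵥ tu j) = tlam j * s := by
    have h := hRitz j (P u) (hPmem u)
    rw [sub_dotProduct, smul_dotProduct, sub_eq_zero] at h
    rw [dotProduct_comm, h, smul_eq_mul]
    congr 1
    rw [hs, dotProduct_comm]
  -- Galerkin: (P u, ũ)_A = (u, ũ)_A = λ t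
  have hG : (P u) ⬝ᵥ (A *ᵥ tu j) = lam * t := by
    rw [hPproj u (tu j) (htu j), hsymm, heig, smul_dotProduct, smul_eq_mul]
  have hkey : tlam j * s = lam * t := by rw [← hPA, hG]
  -- λ̃ ≠ 0
  have htl0 : tlam j ≠ 0 := by
    have h := hRitz j (tu j) (htu j)
    rw [sub_dotProduct, smul_dotProduct, sub_eq_zero] at h
    have h1 : tu j ⬝ᵥ (A *ᵥ tu j) = 1 := by simpa using htortho j j
    rw [dotProduct_comm, h1, smul_eq_mul] at h
    intro h0
    rw [h0] at h; simp at h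
  -- λ ≠ 0 (in fact positive, from positive definiteness)
  have hl0 : lam ≠ 0 := by
    have hpos := hA.dotProduct_mulVec_pos hu
    rw [heig] at hpos
    simp only [star_trivial, dotProduct_smul, smul_eq_mul] at hpos
    intro h0; rw [h0] at hpos; simp at hpos
  have hlne : tlam j ≠ lam := by
    intro h; exact hne (by rw [h])
  have hd1 : 1 / lam - 1 / tlam j ≠ 0 := sub_ne_zero.mpr hne
  have hd2 : tlam j - lam ≠ 0 := sub_ne_zero.mpr hlne
  have hdiff : (u - P u) ⬝ᵥ tu j = t - s := by
    rw [sub_dotProduct]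
  constructor
  · rw [hPA, hdiff]
    field_simp
    linear_combination hkey
  · rw [hPA, hdiff]
    field_simp
    linear_combination hkey
end

section
/- Let (λ, u) be an exact eigenpair of A, μ = 1/λ, and let i ∈ {1,…,m} be such that δ_i := min_{j≠i, 1≤j≤m} |μ̃_j − μ| > 0. Let E_m^{(i)} be the A-orthogonal projection onto span{ũ_i}. Then ‖(I − E_m^{(i)}) P_K u‖_A ≤ (√(μ̃_1)/δ_i) · ‖u − P_K u‖₂. -/
open Matrix

lemma sumDot {n m : ℕ} (c : Fin m → ℝ) (f : Fin m → Fin n → ℝ) (v : Fin n → ℝ) :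
    (∑ j, c j • f j) ⬝ᵥ v = ∑ j, c j * (f j ⬝ᵥ v) := by
  simp only [dotProduct, Finset.sum_apply, Pi.smul_apply, smul_eq_mul, Finset.sum_mul,
    Finset.mul_sum]
  rw [Finset.sum_comm]
  apply Finset.sum_congr rfl; intros; apply Finset.sum_congr rfl; intros; ring

lemma symDot {n : ℕ} (A : Matrix (Fin n) (Fin n) ℝ) (hA : A.PosDef) (x y : Fin n → ℝ) :
    x ⬝ᵥ (A *ᵥ y) = y ⬝ᵥ (A *ᵥ x) := by
  have h : Aᵀ = A := by
    have h2 := hA.isHermitian.eq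
    rwa [conjTranspose_eq_transpose_of_trivial] at h2
  rw [dotProduct_mulVec, ← mulVec_transpose, h, dotProduct_comm]

lemma dotNonneg {n : ℕ} (x : Fin n → ℝ) : 0 ≤ x ⬝ᵥ x :=
  Finset.sum_nonneg fun i _ => mul_self_nonneg (x i)

/-- The estimate (3.16): `‖(I − E_m^{(i)}) P_K u‖_A ≤ (√(μ̃_1)/δ_i) ‖u − P_K u‖₂`. -/
theorem stmt12 {n m : ℕ} (A : Matrix (Fin n) (Fin n) ℝ) (hA : A.PosDef)
    -- `K` is an `m`-dimensional subspace of `ℝⁿ`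
    (K : Submodule ℝ (Fin n → ℝ)) (hK : Module.finrank ℝ K = m)
    -- `P` is the `A`-orthogonal (Galerkin) projection onto `K`
    (P : (Fin n → ℝ) →ₗ[ℝ] (Fin n → ℝ))
    (hPmem : ∀ x, P x ∈ K)
    (hPproj : ∀ x, ∀ y ∈ K, (P x) ⬝ᵥ (A *ᵥ y) = x ⬝ᵥ (A *ᵥ y))
    -- the Ritz pairs `(λ̃_j, ũ_j)` of `A` on `K`, with `A`-orthonormal Ritz vectors
    (tlam : Fin m → ℝ) (tu : Fin m → (Fin n → ℝ)) (htmono : Monotone tlam)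
    (htu : ∀ j, tu j ∈ K)
    (hRitz : ∀ j, ∀ v ∈ K, ((A *ᵥ tu j) - tlam j • tu j) ⬝ᵥ v = 0)
    (htortho : ∀ i j, tu i ⬝ᵥ (A *ᵥ tu j) = if i = j then (1 : ℝ) else 0)
    -- `(λ, u)` is an exact eigenpair of `A`
    (lam : ℝ) (u : Fin n → ℝ) (hu : u ≠ 0) (heig : A *ᵥ u = lam • u)
    -- `δ_i > 0` is (a lower bound for) `min_{j ≠ i} |μ̃_j − μ|` where `μ = 1/λ`, `μ̃_j = 1/λ̃_j`
    (i : Fin m) (δ : ℝ) (hδpos : 0 < δ)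
    (hδ : ∀ j : Fin m, j ≠ i → δ ≤ |1 / tlam j - 1 / lam|)
    -- `E` is the `A`-orthogonal projection `E_m^{(i)}` onto `span{ũ_i}`
    (E : (Fin n → ℝ) →ₗ[ℝ] (Fin n → ℝ))
    (hEmem : ∀ x, E x ∈ Submodule.span ℝ {tu i})
    (hEproj : ∀ x, ∀ y ∈ Submodule.span ℝ {tu i},
      (E x) ⬝ᵥ (A *ᵥ y) = x ⬝ᵥ (A *ᵥ y)) :
    aN A (P u - E (P u)) ≤
      Real.sqrt (1 / tlam ⟨0, i.pos⟩) / δ * l2N (u - P u) := by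
  classical
  have hsym := symDot A hA
  set i0 : Fin m := ⟨0, i.pos⟩ with hi0
  have hti0 : (0:ℝ) < (0:ℝ) + 1 := by norm_num
  have hKle : Submodule.span ℝ (Set.range tu) ≤ K :=
    Submodule.span_le.2 (Set.range_subset_iff.2 htu)
  have htt : ∀ j k, tlam j * (tu j ⬝ᵥ tu k) = if k = j then 1 else 0 := by
    intro j k
    have h := hRitz j (tu k) (htu k)
    rw [sub_dotProduct, smul_dotProduct, smul_eq_mul, sub_eq_zero] at h
    rw [← h, dotProduct_comm]
    exact htortho k j
  have htpos : ∀ j, 0 < tlam j := by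
    intro j
    have h1 := htt j j
    simp only [if_true, ite_true, eq_self_iff_true, if_pos] at h1
    nlinarith [dotNonneg (tu j)]
  have htl2 : ∀ j k, tu j ⬝ᵥ tu k = (if k = j then 1 else 0) / tlam j := by
    intro j k
    rw [eq_div_iff (htpos j).ne', mul_comm]
    exact htt j k
  have hli : LinearIndependent ℝ tu := by
    rw [Fintype.linearIndependent_iff]
    intro g hg j
    have h := congrArg (fun v => v ⬝ᵥ (A *ᵥ tu j)) hg
    simp only [sumDot, zero_dotProduct, htortho, mul_ite, mul_one, mul_zero,
      Finset.sum_ite_eq', Finset.mem_univ, if_pos] at h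
    exact h
  have hspan : Submodule.span ℝ (Set.range tu) = K := by
    apply Submodule.eq_of_le_of_finrank_le hKle
    rw [hK, finrank_span_eq_card hli, Fintype.card_fin]
  set w := u - P u with hw
  set z := P u - E (P u) with hzdef
  set c : Fin m → ℝ := fun j => z ⬝ᵥ (A *ᵥ tu j) with hc
  have hEK : E (P u) ∈ K :=
    (Submodule.span_le.2 (Set.singleton_subset_iff.2 (htu i))) (hEmem (P u))
  have hzK : z ∈ K := K.sub_mem (hPmem u) hEK
  obtain ⟨d, hd⟩ := (Submodule.mem_span_range_iff_exists_fun ℝ).1 (hspan ▸ hzK)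
  have hdc : ∀ j, d j = c j := by
    intro j
    have h := congrArg (fun v => v ⬝ᵥ (A *ᵥ tu j)) hd
    simp only [sumDot, htortho, mul_ite, mul_one, mul_zero,
      Finset.sum_ite_eq', Finset.mem_univ, if_pos] at h
    exact h
  have hz : z = ∑ j, c j • tu j := by
    rw [← hd]
    exact Finset.sum_congr rfl fun j _ => by rw [hdc j]
  set S := ∑ j, (c j) ^ 2 with hS
  have hSnn : 0 ≤ S := Finset.sum_nonneg fun j _ => sq_nonneg _
  have hzz : z ⬝ᵥ (A *ᵥ z) = S := by
    calc z ⬝ᵥ (A *ᵥ z) = (∑ j, c j • tu j) ⬝ᵥ (A *ᵥ z) := by rw [← hz]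
      _ = ∑ j, c j * (tu j ⬝ᵥ (A *ᵥ z)) := sumDot _ _ _
      _ = ∑ j, c j * c j := by
          refine Finset.sum_congr rfl fun j _ => ?_
          rw [hsym (tu j) z]
      _ = S := by
          rw [hS]
          exact Finset.sum_congr rfl fun j _ => (sq (c j)).symm
  have hci : c i = 0 := by
    show z ⬝ᵥ (A *ᵥ tu i) = 0
    rw [hzdef, sub_dotProduct,
      hEproj (P u) (tu i) (Submodule.mem_span_singleton_self _), sub_self]
  have hlam : 0 < lam := by
    have h1 := hA.dotProduct_mulVec_pos hu
    simp only [star_trivial] at h1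
    rw [heig, dotProduct_smul, smul_eq_mul] at h1
    have h2 : 0 < u ⬝ᵥ u :=
      lt_of_le_of_ne (dotNonneg u) fun h => hu (dotProduct_self_eq_zero.1 h.symm)
    nlinarith
  have hcw : ∀ j, j ≠ i → tu j ⬝ᵥ w = -(c j * (1 / tlam j - 1 / lam)) := by
    intro j hj
    have hE0 : E (P u) ⬝ᵥ (A *ᵥ tu j) = 0 := by
      obtain ⟨t, ht⟩ := Submodule.mem_span_singleton.1 (hEmem (P u))
      rw [← ht, smul_dotProduct, htortho i j, if_neg fun h => hj h.symm, smul_zero]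
    have hcj : c j = P u ⬝ᵥ (A *ᵥ tu j) := by
      show z ⬝ᵥ (A *ᵥ tu j) = _
      rw [hzdef, sub_dotProduct, hE0, sub_zero]
    have hGal : P u ⬝ᵥ (A *ᵥ tu j) = lam * (tu j ⬝ᵥ u) := by
      rw [hPproj u (tu j) (htu j), hsym u (tu j), heig, dotProduct_smul, smul_eq_mul]
    have hRz : P u ⬝ᵥ (A *ᵥ tu j) = tlam j * (tu j ⬝ᵥ P u) := by
      have h := hRitz j (P u) (hPmem u)
      rw [sub_dotProduct, smul_dotProduct, smul_eq_mul, sub_eq_zero] at h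
      rw [dotProduct_comm]
      exact h
    have h1 : tu j ⬝ᵥ u = c j / lam := by
      rw [eq_div_iff hlam.ne', hcj, hGal]; ring
    have h2 : tu j ⬝ᵥ P u = c j / tlam j := by
      rw [eq_div_iff (htpos j).ne', hcj, hRz]; ring
    rw [hw, dotProduct_sub, h1, h2]
    field_simp
    ring
  set r : Fin m → ℝ := fun j => 1 / tlam j - 1 / lam with hr
  have hrδ : ∀ j, j ≠ i → δ ≤ |r j| := fun j hj => hδ j hj
  set a : Fin m → ℝ := fun j => if j = i then 0 else c j / r j with ha
  set y := ∑ j, a j • tu j with hy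
  have hyw : y ⬝ᵥ w = -S := by
    rw [hy, sumDot]
    have hterm : ∀ j ∈ Finset.univ, a j * (tu j ⬝ᵥ w) = -(c j ^ 2) := by
      intro j _
      by_cases hj : j = i
      · subst hj; simp [ha, hci]
      · have hrne : r j ≠ 0 := by
          intro h
          have h3 := hrδ j hj
          rw [h, abs_zero] at h3
          linarith
        show (if j = i then (0:ℝ) else c j / r j) * (tu j ⬝ᵥ w) = -(c j ^ 2)
        rw [if_neg hj, hcw j hj]
        show c j / r j * -(c j * r j) = -(c j ^ 2)
        field_simp
    rw [Finset.sum_congr rfl hterm, hS, ← Finset.sum_neg_distrib]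
  have hterm2 : ∀ j, a j ^ 2 / tlam j ≤ c j ^ 2 * ((1 / tlam i0) / δ ^ 2) := by
    intro j
    have hti : (0:ℝ) < tlam i0 := htpos i0
    have hmono : tlam i0 ≤ tlam j := htmono (by rw [Fin.le_def]; exact Nat.zero_le _)
    have haj : a j ^ 2 ≤ c j ^ 2 / δ ^ 2 := by
      by_cases hj : j = i
      · have h0 : a j = 0 := by rw [ha]; simp [hj]
        simpa [h0] using div_nonneg (sq_nonneg (c j)) (sq_nonneg δ)
      · have h0 : a j = c j / r j := by rw [ha]; simp [hj]
        rw [h0, div_pow]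
        have h1 : δ ^ 2 ≤ (r j) ^ 2 := by
          have h2 := hrδ j hj
          nlinarith [abs_nonneg (r j), sq_abs (r j)]
        gcongr
    calc a j ^ 2 / tlam j ≤ (c j ^ 2 / δ ^ 2) / tlam i0 := by
          have h3 := htpos j
          gcongr
      _ = c j ^ 2 * ((1 / tlam i0) / δ ^ 2) := by ring
  have hjy : ∀ j, tu j ⬝ᵥ (∑ k, a k • tu k) = a j / tlam j := by
    intro j
    rw [dotProduct_comm, sumDot]
    have h : ∀ k ∈ Finset.univ, a k * (tu k ⬝ᵥ tu j) = if j = k then a k / tlam k else 0 := by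
      intro k _
      rw [htl2]
      split_ifs with h
      · rw [mul_one_div]
      · simp
    rw [Finset.sum_congr rfl h, Finset.sum_ite_eq]
    simp
  have hyy : y ⬝ᵥ y ≤ (1 / tlam i0) / δ ^ 2 * S := by
    have h1 : y ⬝ᵥ y = ∑ j, a j ^ 2 / tlam j := by
      rw [hy, sumDot]
      refine Finset.sum_congr rfl fun j _ => ?_
      rw [hjy j]
      ring
    rw [h1]
    calc ∑ j, a j ^ 2 / tlam j ≤ ∑ j, c j ^ 2 * ((1 / tlam i0) / δ ^ 2) :=
          Finset.sum_le_sum fun j _ => hterm2 j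
      _ = (1 / tlam i0) / δ ^ 2 * S := by
          rw [← Finset.sum_mul, ← hS, mul_comm]
  have hCS : (y ⬝ᵥ w) ^ 2 ≤ (y ⬝ᵥ y) * (w ⬝ᵥ w) := by
    have h := Finset.sum_mul_sq_le_sq_mul_sq Finset.univ y w
    simpa only [dotProduct, pow_two] using h
  have hkey : S ^ 2 ≤ ((1 / tlam i0) / δ ^ 2 * S) * (w ⬝ᵥ w) := by
    calc S ^ 2 = (y ⬝ᵥ w) ^ 2 := by rw [hyw]; ring
      _ ≤ (y ⬝ᵥ y) * (w ⬝ᵥ w) := hCS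
      _ ≤ _ := mul_le_mul_of_nonneg_right hyy (dotNonneg w)
  have hfin : S ≤ (1 / tlam i0) / δ ^ 2 * (w ⬝ᵥ w) := by
    rcases eq_or_lt_of_le hSnn with h0 | hpos
    · rw [← h0]
      have hti := htpos i0
      have := dotNonneg w
      positivity
    · nlinarith [hkey, hpos]
  have haN : aN A z = Real.sqrt S := by rw [aN, hzz]
  rw [haN]
  have hstep : Real.sqrt S ≤ Real.sqrt ((1 / tlam i0) / δ ^ 2 * (w ⬝ᵥ w)) :=
    Real.sqrt_le_sqrt hfin
  refine hstep.trans (le_of_eq ?_)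
  have hnn : (0:ℝ) ≤ (1 / tlam i0) / δ ^ 2 :=
    div_nonneg (one_div_nonneg.2 (htpos i0).le) (sq_nonneg δ)
  rw [Real.sqrt_mul hnn, Real.sqrt_div (one_div_nonneg.2 (htpos i0).le),
    Real.sqrt_sq hδpos.le]
  rfl
end

section
/- Let (λ, u) be an exact eigenpair of A, μ = 1/λ, and let i ∈ {1,…,m} be such that δ_i := min_{j≠i, 1≤j≤m} |μ̃_j − μ| > 0. Let E_m^{(i)} be the A-orthogonal projection onto span{ũ_i}. Then ‖(I − E_m^{(i)}) P_K u‖₂ ≤ (μ̃_1/δ_i) · ‖u − P_K u‖₂. -/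
open Matrix

/-- Left linearity of the dot product over finite sums. -/
lemma sum_dotP {n m : ℕ} (f : Fin m → (Fin n → ℝ)) (v : Fin n → ℝ) :
    (∑ j, f j) ⬝ᵥ v = ∑ j, f j ⬝ᵥ v := by
  simp only [dotProduct, Finset.sum_apply, Finset.sum_mul]
  exact Finset.sum_comm

/-- Right linearity of the dot product over finite sums. -/
lemma dotP_sum {n m : ℕ} (f : Fin m → (Fin n → ℝ)) (v : Fin n → ℝ) :
    v ⬝ᵥ (∑ j, f j) = ∑ j, v ⬝ᵥ f j := by
  rw [dotProduct_comm, sum_dotP]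
  exact Finset.sum_congr rfl fun j _ => dotProduct_comm _ _

set_option maxHeartbeats 1000000 in
/-- The estimate (3.19): `‖(I − E_m^{(i)}) P_K u‖₂ ≤ (μ̃_1/δ_i) ‖u − P_K u‖₂`. -/
theorem stmt13 {n m : ℕ} (A : Matrix (Fin n) (Fin n) ℝ) (hA : A.PosDef)
    -- `K` is an `m`-dimensional subspace of `ℝⁿ`
    (K : Submodule ℝ (Fin n → ℝ)) (hK : Module.finrank ℝ K = m)
    -- `P` is the `A`-orthogonal (Galerkin) projection onto `K`
    (P : (Fin n → ℝ) →ₗ[ℝ] (Fin n → ℝ))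
    (hPmem : ∀ x, P x ∈ K)
    (hPproj : ∀ x, ∀ y ∈ K, (P x) ⬝ᵥ (A *ᵥ y) = x ⬝ᵥ (A *ᵥ y))
    -- the Ritz pairs `(λ̃_j, ũ_j)` of `A` on `K`, with `A`-orthonormal Ritz vectors
    (tlam : Fin m → ℝ) (tu : Fin m → (Fin n → ℝ)) (htmono : Monotone tlam)
    (htu : ∀ j, tu j ∈ K)
    (hRitz : ∀ j, ∀ v ∈ K, ((A *ᵥ tu j) - tlam j • tu j) ⬝ᵥ v = 0)
    (htortho : ∀ i j, tu i ⬝ᵥ (A *ᵥ tu j) = if i = j then (1 : ℝ) else 0)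
    -- `(λ, u)` is an exact eigenpair of `A`
    (lam : ℝ) (u : Fin n → ℝ) (hu : u ≠ 0) (heig : A *ᵥ u = lam • u)
    -- `δ_i > 0` is (a lower bound for) `min_{j ≠ i} |μ̃_j − μ|` where `μ = 1/λ`, `μ̃_j = 1/λ̃_j`
    (i : Fin m) (δ : ℝ) (hδpos : 0 < δ)
    (hδ : ∀ j : Fin m, j ≠ i → δ ≤ |1 / tlam j - 1 / lam|)
    -- `E` is the `A`-orthogonal projection `E_m^{(i)}` onto `span{ũ_i}`
    (E : (Fin n → ℝ) →ₗ[ℝ] (Fin n → ℝ))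
    (hEmem : ∀ x, E x ∈ Submodule.span ℝ {tu i})
    (hEproj : ∀ x, ∀ y ∈ Submodule.span ℝ {tu i},
      (E x) ⬝ᵥ (A *ᵥ y) = x ⬝ᵥ (A *ᵥ y)) :
    l2N (P u - E (P u)) ≤ (1 / tlam ⟨0, i.pos⟩) / δ * l2N (u - P u) := by
  classical
  have hAT : Aᵀ = A := (conjTranspose_eq_transpose_of_trivial A) ▸ hA.1
  have hsym : ∀ x y : Fin n → ℝ, x ⬝ᵥ (A *ᵥ y) = (A *ᵥ x) ⬝ᵥ y := by
    intro x y; rw [dotProduct_mulVec, ← mulVec_transpose, hAT]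
  have hnn : ∀ v : Fin n → ℝ, 0 ≤ v ⬝ᵥ v := fun v =>
    Finset.sum_nonneg fun k _ => mul_self_nonneg (v k)
  have hdpos : ∀ v : Fin n → ℝ, v ≠ 0 → 0 < v ⬝ᵥ v := by
    intro v hv
    have h1 : 0 ≤ v ⬝ᵥ v := hnn v
    rcases h1.lt_or_eq with h' | h'
    · exact h'
    · exact absurd (dotProduct_self_eq_zero.1 h'.symm) hv
  -- positivity of Ritz values and l2 norms of Ritz vectors
  have htl : ∀ j, 0 < tlam j ∧ tu j ⬝ᵥ tu j = 1 / tlam j := by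
    intro j
    have h0 := hRitz j (tu j) (htu j)
    rw [sub_dotProduct, smul_dotProduct] at h0
    have h1 : (A *ᵥ tu j) ⬝ᵥ tu j = 1 := by
      rw [← hsym, htortho]; simp
    have h2 : 0 ≤ tu j ⬝ᵥ tu j := hnn (tu j)
    rw [h1, smul_eq_mul] at h0
    have hpos : 0 < tlam j := by nlinarith
    refine ⟨hpos, ?_⟩
    rw [eq_div_iff (ne_of_gt hpos), mul_comm]
    linarith
  -- l2 inner products of Ritz vectors
  have hdot : ∀ j k, tu j ⬝ᵥ tu k = if j = k then 1 / tlam j else 0 := by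
    intro j k
    by_cases h : j = k
    · subst h; simp [(htl j).2]
    · simp only [if_neg h]
      have h0 := hRitz k (tu j) (htu j)
      rw [sub_dotProduct, smul_dotProduct, smul_eq_mul] at h0
      have h1 : (A *ᵥ tu k) ⬝ᵥ tu j = 0 := by
        rw [← hsym, htortho, if_neg (Ne.symm h)]
      rw [h1] at h0
      have hk := (htl k).1
      have h2 : tu k ⬝ᵥ tu j = 0 := by
        rcases mul_eq_zero.1 (by linarith : tlam k * (tu k ⬝ᵥ tu j) = 0) with h' | h'
        · exact absurd h' (ne_of_gt hk)
        · exact h'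
      rw [dotProduct_comm]; exact h2
  -- lam > 0
  have hlam : 0 < lam := by
    have h1 : 0 < u ⬝ᵥ (A *ᵥ u) := by simpa using hA.dotProduct_mulVec_pos hu
    rw [heig, dotProduct_smul, smul_eq_mul] at h1
    have h2 : 0 < u ⬝ᵥ u := hdpos u hu
    nlinarith
  -- the coefficients
  obtain ⟨c, hcdef⟩ : ∃ c : Fin m → ℝ, ∀ j, c j = P u ⬝ᵥ (A *ᵥ tu j) :=
    ⟨_, fun j => rfl⟩
  have hcu : ∀ j, c j = lam * (u ⬝ᵥ tu j) := by
    intro j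
    rw [hcdef j, hPproj u (tu j) (htu j), hsym, heig, smul_dotProduct, smul_eq_mul,
      dotProduct_comm]
  have hcP : ∀ j, c j = tlam j * (tu j ⬝ᵥ P u) := by
    intro j
    have h0 := hRitz j (P u) (hPmem u)
    rw [sub_dotProduct, smul_dotProduct, smul_eq_mul] at h0
    rw [hcdef j, dotProduct_comm]
    linarith
  -- key: tu j ⬝ (u - P u) = (1/lam - 1/tlam j) * c j
  have hw : ∀ j, tu j ⬝ᵥ (u - P u) = (1 / lam - 1 / tlam j) * c j := by
    intro j
    rw [dotProduct_sub]
    have h1 : tu j ⬝ᵥ u = c j / lam := by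
      rw [hcu j, dotProduct_comm, mul_comm, mul_div_assoc, div_self (ne_of_gt hlam), mul_one]
    have h2 : tu j ⬝ᵥ P u = c j / tlam j := by
      rw [hcP j, mul_comm, mul_div_assoc, div_self (ne_of_gt (htl j).1), mul_one]
    rw [h1, h2]
    ring
  -- linear independence and spanning
  have hli : LinearIndependent ℝ tu := by
    rw [Fintype.linearIndependent_iff]
    intro g hg k
    have h0 := congrArg (fun v => v ⬝ᵥ (A *ᵥ tu k)) hg
    simp only [sum_dotP, smul_dotProduct, smul_eq_mul, zero_dotProduct,
      htortho, mul_ite, mul_one, mul_zero] at h0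
    rwa [Finset.sum_ite_eq' Finset.univ k g, if_pos (Finset.mem_univ k)] at h0
  have hspan : Submodule.span ℝ (Set.range tu) = K := by
    apply Submodule.eq_of_le_of_finrank_le
    · rw [Submodule.span_le]; rintro _ ⟨j, rfl⟩; exact htu j
    · rw [hK, finrank_span_eq_card hli, Fintype.card_fin]
  -- expand P u in the Ritz basis
  have hPu : P u ∈ Submodule.span ℝ (Set.range tu) := hspan ▸ hPmem u
  rw [Submodule.mem_span_range_iff_exists_fun] at hPu
  obtain ⟨a, ha⟩ := hPu
  have hac : ∀ k, a k = c k := by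
    intro k
    have h0 := congrArg (fun v => v ⬝ᵥ (A *ᵥ tu k)) ha
    simp only [sum_dotP, smul_dotProduct, smul_eq_mul,
      htortho, mul_ite, mul_one, mul_zero] at h0
    rw [Finset.sum_ite_eq' Finset.univ k a, if_pos (Finset.mem_univ k)] at h0
    rw [h0, hcdef k]
  -- E (P u) = c i • tu i
  have hEPu : E (P u) = c i • tu i := by
    obtain ⟨t, ht⟩ := Submodule.mem_span_singleton.1 (hEmem (P u))
    have h0 := hEproj (P u) (tu i) (Submodule.mem_span_singleton_self _)
    rw [← ht, smul_dotProduct, htortho i i, if_pos rfl, smul_eq_mul, mul_one] at h0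
    rw [← ht, h0, hcdef i]
  -- decompose the difference
  obtain ⟨c', hc'⟩ : ∃ c' : Fin m → ℝ, ∀ j, c' j = if j = i then 0 else c j :=
    ⟨_, fun j => rfl⟩
  have hd : P u - E (P u) = ∑ j, c' j • tu j := by
    rw [hEPu, ← ha]
    have hterm : ∀ j : Fin m, a j • tu j = c' j • tu j + (if j = i then c i • tu i else 0) := by
      intro j
      by_cases h : j = i
      · subst h; simp [hc', hac]
      · simp [hc', h, hac]
    rw [Finset.sum_congr rfl fun j _ => hterm j, Finset.sum_add_distrib,
      Finset.sum_ite_eq' Finset.univ i, if_pos (Finset.mem_univ i)]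
    abel
  -- the squared norm of the difference
  have hdd : (∑ j, c' j • tu j) ⬝ᵥ (∑ j, c' j • tu j) = ∑ j, c' j ^ 2 * (1 / tlam j) := by
    rw [sum_dotP]
    refine Finset.sum_congr rfl fun j _ => ?_
    rw [smul_dotProduct, dotP_sum, smul_eq_mul]
    have hterm : ∀ k : Fin m, tu j ⬝ᵥ c' k • tu k = if k = j then c' j * (1 / tlam j) else 0 := by
      intro k
      rw [dotProduct_smul, smul_eq_mul, hdot]
      by_cases h : k = j
      · subst h; simp [mul_comm]
      · simp [h, Ne.symm h]
    rw [Finset.sum_congr rfl fun k _ => hterm k, Finset.sum_ite_eq' Finset.univ j,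
      if_pos (Finset.mem_univ j)]
    ring
  -- Bessel-type inequality
  obtain ⟨w, hwdef⟩ : ∃ w : Fin m → ℝ, ∀ j, w j = tu j ⬝ᵥ (u - P u) :=
    ⟨_, fun j => rfl⟩
  have hBessel : ∑ j, tlam j * w j ^ 2 ≤ (u - P u) ⬝ᵥ (u - P u) := by
    have h1 : (∑ j, (tlam j * w j) • tu j) ⬝ᵥ (u - P u) = ∑ j, tlam j * w j ^ 2 := by
      rw [sum_dotP]
      refine Finset.sum_congr rfl fun j _ => ?_
      rw [smul_dotProduct, smul_eq_mul, ← hwdef j]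
      ring
    have h2 : (∑ j, (tlam j * w j) • tu j) ⬝ᵥ (∑ j, (tlam j * w j) • tu j)
        = ∑ j, tlam j * w j ^ 2 := by
      rw [sum_dotP]
      refine Finset.sum_congr rfl fun j _ => ?_
      rw [smul_dotProduct, dotP_sum, smul_eq_mul]
      have hterm : ∀ k : Fin m, tu j ⬝ᵥ (tlam k * w k) • tu k
          = if k = j then tlam j * w j * (1 / tlam j) else 0 := by
        intro k
        rw [dotProduct_smul, smul_eq_mul, hdot]
        by_cases h : k = j
        · subst h; simp [mul_comm]
        · simp [h, Ne.symm h]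
      rw [Finset.sum_congr rfl fun k _ => hterm k, Finset.sum_ite_eq' Finset.univ j,
        if_pos (Finset.mem_univ j)]
      have hj : tlam j ≠ 0 := ne_of_gt (htl j).1
      field_simp
    have h3 : 0 ≤ ((u - P u) - ∑ j, (tlam j * w j) • tu j)
        ⬝ᵥ ((u - P u) - ∑ j, (tlam j * w j) • tu j) := hnn _
    have h4 : ((u - P u) - ∑ j, (tlam j * w j) • tu j)
        ⬝ᵥ ((u - P u) - ∑ j, (tlam j * w j) • tu j)
        = (u - P u) ⬝ᵥ (u - P u) - (u - P u) ⬝ᵥ (∑ j, (tlam j * w j) • tu j)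
          - ((∑ j, (tlam j * w j) • tu j) ⬝ᵥ (u - P u)
            - (∑ j, (tlam j * w j) • tu j) ⬝ᵥ (∑ j, (tlam j * w j) • tu j)) := by
      simp only [sub_dotProduct, dotProduct_sub]
      ring
    have h5 : (u - P u) ⬝ᵥ (∑ j, (tlam j * w j) • tu j)
        = (∑ j, (tlam j * w j) • tu j) ⬝ᵥ (u - P u) := dotProduct_comm _ _
    rw [h4, h5, h1, h2] at h3
    linarith
  -- the termwise bound
  have hm0 : 0 < m := Fin.pos i
  have ht0pos : 0 < tlam ⟨0, hm0⟩ := (htl _).1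
  have hC : (0:ℝ) ≤ 1 / tlam ⟨0, hm0⟩ / δ := by positivity
  have hterm : ∀ j : Fin m, c' j ^ 2 * (1 / tlam j)
      ≤ (1 / tlam ⟨0, hm0⟩ / δ) ^ 2 * (tlam j * w j ^ 2) := by
    intro j
    have hj := (htl j).1
    by_cases h : j = i
    · subst h
      rw [hc' j, if_pos rfl]
      have : (0:ℝ) ≤ (1 / tlam ⟨0, hm0⟩ / δ) ^ 2 * (tlam j * w j ^ 2) := by positivity
      simpa using this
    · rw [hc' j, if_neg h]
      have ht0j : tlam ⟨0, hm0⟩ ≤ tlam j := htmono (by simp [Fin.le_def])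
      have habs := hδ j h
      have hsq : δ ^ 2 ≤ (1 / tlam j - 1 / lam) ^ 2 := by
        have h4 := abs_nonneg (1 / tlam j - 1 / lam)
        nlinarith [sq_abs (1 / tlam j - 1 / lam)]
      have hwsq : w j ^ 2 = (1 / tlam j - 1 / lam) ^ 2 * c j ^ 2 := by
        rw [hwdef j, hw j]; ring
      rw [hwsq]
      have h1 : c j ^ 2 * (1 / tlam j)
          ≤ (1 / tlam ⟨0, hm0⟩ / δ) ^ 2 * (tlam j * (δ ^ 2 * c j ^ 2)) := by
        have hh : (1 / tlam ⟨0, hm0⟩ / δ) ^ 2 * (tlam j * (δ ^ 2 * c j ^ 2))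
            = (tlam j / tlam ⟨0, hm0⟩ ^ 2) * c j ^ 2 := by
          field_simp
        rw [hh]
        have h5 : 1 / tlam j ≤ tlam j / tlam ⟨0, hm0⟩ ^ 2 := by
          rw [div_le_div_iff₀ hj (by positivity)]
          nlinarith
        calc c j ^ 2 * (1 / tlam j) ≤ c j ^ 2 * (tlam j / tlam ⟨0, hm0⟩ ^ 2) :=
              mul_le_mul_of_nonneg_left h5 (sq_nonneg (c j))
          _ = tlam j / tlam ⟨0, hm0⟩ ^ 2 * c j ^ 2 := mul_comm _ _
      refine h1.trans ?_
      have h6 : tlam j * (δ ^ 2 * c j ^ 2)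
          ≤ tlam j * ((1 / tlam j - 1 / lam) ^ 2 * c j ^ 2) := by
        have h7 : δ ^ 2 * c j ^ 2 ≤ (1 / tlam j - 1 / lam) ^ 2 * c j ^ 2 :=
          mul_le_mul_of_nonneg_right hsq (sq_nonneg (c j))
        exact mul_le_mul_of_nonneg_left h7 (le_of_lt hj)
      exact mul_le_mul_of_nonneg_left h6 (sq_nonneg _)
  -- put everything together
  have hmain : (P u - E (P u)) ⬝ᵥ (P u - E (P u))
      ≤ (1 / tlam ⟨0, hm0⟩ / δ) ^ 2 * ((u - P u) ⬝ᵥ (u - P u)) := by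
    rw [hd, hdd]
    calc ∑ j, c' j ^ 2 * (1 / tlam j)
        ≤ ∑ j, (1 / tlam ⟨0, hm0⟩ / δ) ^ 2 * (tlam j * w j ^ 2) :=
          Finset.sum_le_sum fun j _ => hterm j
      _ = (1 / tlam ⟨0, hm0⟩ / δ) ^ 2 * ∑ j, tlam j * w j ^ 2 := by rw [Finset.mul_sum]
      _ ≤ (1 / tlam ⟨0, hm0⟩ / δ) ^ 2 * ((u - P u) ⬝ᵥ (u - P u)) :=
          mul_le_mul_of_nonneg_left hBessel (sq_nonneg _)
  rw [l2N, l2N]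
  calc Real.sqrt ((P u - E (P u)) ⬝ᵥ (P u - E (P u)))
      ≤ Real.sqrt ((1 / tlam ⟨0, hm0⟩ / δ) ^ 2 * ((u - P u) ⬝ᵥ (u - P u))) :=
        Real.sqrt_le_sqrt hmain
    _ = 1 / tlam ⟨0, hm0⟩ / δ * Real.sqrt ((u - P u) ⬝ᵥ (u - P u)) := by
        rw [Real.sqrt_mul (by positivity), Real.sqrt_sq hC]
end
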